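/- arXiv:0911.3969 — 9 statements merged into one kernel-verified Lean document; each statement's English description precedes it below -/
import Mathlib

section
/- Let H be an oriented graph on k vertices with e(H) arcs, let ε > 0, and let D be an oriented graph on n vertices with bias(D) < ε·n^2. Then hom(H,D) ≥ hom(H̄,D)/3^{e(H)} − (ε/2)·n^k. -/
open Finset

/-- The number of arcs from `A` to `B` in the oriented graph with arc relation `Adj`. -/
def arcsFrom {V : Type*} (Adj : V → V → Prop) [DecidableRel Adj] (A B : Finset V) : ℕ :=
  ((A ×ˢ B).filter fun p => Adj p.1 p.2).card

/-- The total number of arcs. -/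
def numArcs {V : Type*} [Fintype V] (Adj : V → V → Prop) [DecidableRel Adj] : ℕ :=
  arcsFrom Adj Finset.univ Finset.univ

/-- `bias(D) = max { e(A,B) : A,B ⊆ V, e(B,A) ≤ e(A,B)/2 }`. -/
def bias {V : Type*} [Fintype V] [DecidableEq V] (Adj : V → V → Prop) [DecidableRel Adj] : ℕ :=
  Finset.univ.sup fun p : Finset V × Finset V =>
    if 2 * arcsFrom Adj p.2 p.1 ≤ arcsFrom Adj p.1 p.2 then arcsFrom Adj p.1 p.2 else 0

/-- `hom(H,D)`: the number of maps `φ : V(H) → V(D)` sending every arc of `H` to an arc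
of `D` (with the same orientation). -/
def homCount {W V : Type*} [Fintype W] [DecidableEq W] [Fintype V]
    (HAdj : W → W → Prop) [DecidableRel HAdj] (Adj : V → V → Prop) [DecidableRel Adj] : ℕ :=
  (Finset.univ.filter fun φ : W → V => ∀ x y : W, HAdj x y → Adj (φ x) (φ y)).card

/-- `hom(H̄,D)`: the number of maps `φ : V(H) → V(D)` sending every arc of `H` to an arc
of `D` in one of the two directions. -/
def homBarCount {W V : Type*} [Fintype W] [DecidableEq W] [Fintype V]
    (HAdj : W → W → Prop) [DecidableRel HAdj] (Adj : V → V → Prop) [DecidableRel Adj] : ℕ :=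
  (Finset.univ.filter fun φ : W → V =>
      ∀ x y : W, HAdj x y → Adj (φ x) (φ y) ∨ Adj (φ y) (φ x)).card

set_option synthInstance.maxSize 512
set_option linter.unusedSectionVars false

section Aux
variable {W V : Type*} [Fintype W] [DecidableEq W] [Fintype V] [DecidableEq V]
variable (HAdj : W → W → Prop) [DecidableRel HAdj] (Adj : V → V → Prop) [DecidableRel Adj]

lemma bias_key (A B : Finset V) :
    arcsFrom Adj A B + arcsFrom Adj B A ≤ 3 * arcsFrom Adj A B + bias Adj := by
  by_cases h : arcsFrom Adj B A ≤ 2 * arcsFrom Adj A B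
  · omega
  · have h2 := Finset.le_sup (f := fun p : Finset V × Finset V =>
        if 2 * arcsFrom Adj p.2 p.1 ≤ arcsFrom Adj p.1 p.2 then arcsFrom Adj p.1 p.2 else 0)
        (mem_univ (B, A))
    rw [bias]
    simp only at h2
    rw [if_pos (by omega : 2 * arcsFrom Adj A B ≤ arcsFrom Adj B A)] at h2
    omega

lemma arcs_swap (hD : ∀ x y : V, Adj x y → ¬ Adj y x) (A B : Finset V) :
    ((A ×ˢ B).filter fun p => Adj p.1 p.2 ∨ Adj p.2 p.1).card
      = arcsFrom Adj A B + arcsFrom Adj B A := by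
  have hdisj : Disjoint ((A ×ˢ B).filter fun p => Adj p.1 p.2)
      ((A ×ˢ B).filter fun p => Adj p.2 p.1) := by
    rw [Finset.disjoint_left]
    rintro ⟨a, b⟩ h1 h2
    simp only [mem_filter] at h1 h2
    exact hD a b h1.2 h2.2
  rw [filter_or, card_union_of_disjoint hdisj]
  have hs : ((A ×ˢ B).filter fun p => Adj p.2 p.1).card = arcsFrom Adj B A := by
    rw [arcsFrom]
    apply Finset.card_bij (fun p _ => Prod.swap p)
    · rintro ⟨a, b⟩ hab
      simp only [mem_filter, mem_product] at hab ⊢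
      exact ⟨⟨hab.1.2, hab.1.1⟩, hab.2⟩
    · rintro ⟨a, b⟩ _ ⟨c, d⟩ _ h
      simpa [Prod.ext_iff, and_comm] using h
    · rintro ⟨a, b⟩ hab
      simp only [mem_filter, mem_product] at hab
      exact ⟨(b, a), by simp [mem_filter, hab.1.1, hab.1.2, hab.2], rfl⟩
  rw [hs]
  rfl

def mixPred (S : Finset (W × W)) (φ : W → V) : Prop :=
  ∀ p : W × W, HAdj p.1 p.2 →
    (p ∈ S → Adj (φ p.1) (φ p.2)) ∧ (p ∉ S → Adj (φ p.1) (φ p.2) ∨ Adj (φ p.2) (φ p.1))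

instance (S : Finset (W × W)) : DecidablePred (mixPred HAdj Adj S) := fun φ => by
  unfold mixPred; infer_instance

def mixCount (S : Finset (W × W)) : ℕ := (univ.filter (mixPred HAdj Adj S)).card

def sideA (S : Finset (W × W)) (x y : W) (ψ : W → V) : Finset V :=
  univ.filter fun u => ∀ z : W, z ≠ x → z ≠ y →
    (HAdj x z → ((x, z) ∈ S → Adj u (ψ z)) ∧ ((x, z) ∉ S → Adj u (ψ z) ∨ Adj (ψ z) u)) ∧
    (HAdj z x → ((z, x) ∈ S → Adj (ψ z) u) ∧ ((z, x) ∉ S → Adj (ψ z) u ∨ Adj u (ψ z)))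

def sideB (S : Finset (W × W)) (x y : W) (ψ : W → V) : Finset V :=
  univ.filter fun v => ∀ z : W, z ≠ x → z ≠ y →
    (HAdj y z → ((y, z) ∈ S → Adj v (ψ z)) ∧ ((y, z) ∉ S → Adj v (ψ z) ∨ Adj (ψ z) v)) ∧
    (HAdj z y → ((z, y) ∈ S → Adj (ψ z) v) ∧ ((z, y) ∉ S → Adj (ψ z) v ∨ Adj v (ψ z)))

def restOK (S : Finset (W × W)) (x y : W) (ψ : W → V) : Prop :=
  ∀ p : W × W, HAdj p.1 p.2 → p.1 ≠ x → p.1 ≠ y → p.2 ≠ x → p.2 ≠ y →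
    (p ∈ S → Adj (ψ p.1) (ψ p.2)) ∧ (p ∉ S → Adj (ψ p.1) (ψ p.2) ∨ Adj (ψ p.2) (ψ p.1))

instance (S : Finset (W × W)) (x y : W) (ψ : W → V) :
    Decidable (restOK HAdj Adj S x y ψ) := by
  unfold restOK; infer_instance

def patch (x y : W) (ψ : W → V) (u v : V) : W → V :=
  fun z => if z = x then u else if z = y then v else ψ z

variable {HAdj Adj}

section PredIff
variable (hH : ∀ x y : W, HAdj x y → ¬ HAdj y x)
  {S : Finset (W × W)} {x y : W} (hxy : HAdj x y) (hS : (x, y) ∉ S) (ψ : W → V) (u v : V)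

include hH hxy

lemma hne_of_arc : x ≠ y := by
  rintro rfl; exact hH x x hxy hxy

include hS

lemma pred_iff :
    mixPred HAdj Adj S (patch x y ψ u v) ↔
      u ∈ sideA HAdj Adj S x y ψ ∧ v ∈ sideB HAdj Adj S x y ψ ∧ restOK HAdj Adj S x y ψ ∧
        (Adj u v ∨ Adj v u) := by
  have hne : x ≠ y := hne_of_arc hH hxy
  have hpx : patch x y ψ u v x = u := by simp [patch]
  have hpy : patch x y ψ u v y = v := by simp [patch, Ne.symm hne]
  have hpz : ∀ z : W, z ≠ x → z ≠ y → patch x y ψ u v z = ψ z := by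
    intro z h1 h2; simp [patch, h1, h2]
  constructor
  · intro h
    refine ⟨?_, ?_, ?_, ?_⟩
    · simp only [sideA, mem_filter, mem_univ, true_and]
      intro z hzx hzy
      constructor
      · intro hxz
        simpa [hpx, hpz z hzx hzy] using h (x, z) hxz
      · intro hzx'
        simpa [hpx, hpz z hzx hzy] using h (z, x) hzx'
    · simp only [sideB, mem_filter, mem_univ, true_and]
      intro z hzx hzy
      constructor
      · intro hyz
        simpa [hpy, hpz z hzx hzy] using h (y, z) hyz
      · intro hzy'
        simpa [hpy, hpz z hzx hzy] using h (z, y) hzy'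
    · intro p hp h1 h2 h3 h4
      simpa [hpz p.1 h1 h2, hpz p.2 h3 h4] using h p hp
    · have := (h (x, y) hxy).2 hS
      simpa [hpx, hpy] using this
  · rintro ⟨hA, hB, hR, hor⟩
    simp only [sideA, sideB, mem_filter, mem_univ, true_and] at hA hB
    rintro ⟨a, b⟩ hp
    rcases eq_or_ne a x with rfl | hax
    · rcases eq_or_ne b y with rfl | hby
      · exact ⟨fun hmem => absurd hmem hS, fun _ => by simpa [hpx, hpy] using hor⟩
      · have hbx : b ≠ a := by rintro rfl; exact hH _ _ hp hp
        simpa [hpx, hpz b hbx hby] using (hA b hbx hby).1 hp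
    · rcases eq_or_ne a y with rfl | hay
      · have hbx : b ≠ x := by rintro rfl; exact hH _ _ hxy hp
        have hby : b ≠ a := by rintro rfl; exact hH _ _ hp hp
        simpa [hpy, hpz b hbx hby] using (hB b hbx hby).1 hp
      · rcases eq_or_ne b x with rfl | hbx
        · simpa [hpx, hpz a hax hay] using (hA a hax hay).2 hp
        · rcases eq_or_ne b y with rfl | hby
          · simpa [hpy, hpz a hax hay] using (hB a hax hay).2 hp
          · simpa [hpz a hax hay, hpz b hbx hby] using hR (a, b) hp hax hay hbx hby

lemma pred_iff' :
    mixPred HAdj Adj (insert (x, y) S) (patch x y ψ u v) ↔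
      u ∈ sideA HAdj Adj S x y ψ ∧ v ∈ sideB HAdj Adj S x y ψ ∧ restOK HAdj Adj S x y ψ ∧
        Adj u v := by
  have hne : x ≠ y := hne_of_arc hH hxy
  have hpx : patch x y ψ u v x = u := by simp [patch]
  have hpy : patch x y ψ u v y = v := by simp [patch, Ne.symm hne]
  have hpz : ∀ z : W, z ≠ x → z ≠ y → patch x y ψ u v z = ψ z := by
    intro z h1 h2; simp [patch, h1, h2]
  have hmem : ∀ p : W × W, p ≠ (x, y) → (p ∈ insert (x, y) S ↔ p ∈ S) := by
    intro p hp; simp [mem_insert, hp]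
  constructor
  · intro h
    refine ⟨?_, ?_, ?_, ?_⟩
    · simp only [sideA, mem_filter, mem_univ, true_and]
      intro z hzx hzy
      constructor
      · intro hxz
        have hne' : (x, z) ≠ (x, y) := fun h => hzy (congrArg Prod.snd h)
        simpa [hpx, hpz z hzx hzy, hmem _ hne'] using h (x, z) hxz
      · intro hzx'
        have hne' : (z, x) ≠ (x, y) := fun h => hzx (congrArg Prod.fst h)
        simpa [hpx, hpz z hzx hzy, hmem _ hne'] using h (z, x) hzx'
    · simp only [sideB, mem_filter, mem_univ, true_and]
      intro z hzx hzy
      constructor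
      · intro hyz
        have hne' : (y, z) ≠ (x, y) := fun h => hne (congrArg Prod.fst h).symm
        simpa [hpy, hpz z hzx hzy, hmem _ hne'] using h (y, z) hyz
      · intro hzy'
        have hne' : (z, y) ≠ (x, y) := fun h => hzx (congrArg Prod.fst h)
        simpa [hpy, hpz z hzx hzy, hmem _ hne'] using h (z, y) hzy'
    · intro p hp h1 h2 h3 h4
      have hne' : p ≠ (x, y) := fun h => h1 (congrArg Prod.fst h)
      simpa [hpz p.1 h1 h2, hpz p.2 h3 h4, hmem _ hne'] using h p hp
    · have := (h (x, y) hxy).1 (mem_insert_self _ _)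
      simpa [hpx, hpy] using this
  · rintro ⟨hA, hB, hR, hadj⟩
    simp only [sideA, sideB, mem_filter, mem_univ, true_and] at hA hB
    rintro ⟨a, b⟩ hp
    rcases eq_or_ne a x with rfl | hax
    · rcases eq_or_ne b y with rfl | hby
      · exact ⟨fun _ => by simpa [hpx, hpy] using hadj,
          fun _ => by simpa [hpx, hpy] using Or.inl hadj⟩
      · have hbx : b ≠ a := by rintro rfl; exact hH _ _ hp hp
        have hne' : (a, b) ≠ (a, y) := fun h => hby (congrArg Prod.snd h)
        rw [hmem _ hne']
        simpa [hpx, hpz b hbx hby] using (hA b hbx hby).1 hp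
    · rcases eq_or_ne a y with rfl | hay
      · have hbx : b ≠ x := by rintro rfl; exact hH _ _ hxy hp
        have hby : b ≠ a := by rintro rfl; exact hH _ _ hp hp
        have hne' : (a, b) ≠ (x, a) := fun h => hax (congrArg Prod.fst h)
        rw [hmem _ hne']
        simpa [hpy, hpz b hbx hby] using (hB b hbx hby).1 hp
      · rcases eq_or_ne b x with rfl | hbx
        · have hne' : (a, b) ≠ (b, y) := fun h => hax (congrArg Prod.fst h)
          rw [hmem _ hne']
          simpa [hpx, hpz a hax hay] using (hA a hax hay).2 hp
        · rcases eq_or_ne b y with rfl | hby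
          · have hne' : (a, b) ≠ (x, b) := fun h => hax (congrArg Prod.fst h)
            rw [hmem _ hne']
            simpa [hpy, hpz a hax hay] using (hB a hax hay).2 hp
          · have hne' : (a, b) ≠ (x, y) := fun h => hax (congrArg Prod.fst h)
            rw [hmem _ hne']
            simpa [hpz a hax hay, hpz b hbx hby] using hR (a, b) hp hax hay hbx hby

end PredIff

section Patch
variable {x y z : W} (ψ : W → V) (u v : V)

lemma patch_fst (hne : x ≠ y) : patch x y ψ u v x = u := by simp [patch]

lemma patch_snd (hne : x ≠ y) : patch x y ψ u v y = v := by simp [patch, Ne.symm hne]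

lemma patch_other (hzx : z ≠ x) (hzy : z ≠ y) : patch x y ψ u v z = ψ z := by
  simp [patch, hzx, hzy]

lemma patch_repr (hne : x ≠ y) {φ ψ : W → V} {v₀ : V} (h : patch x y φ v₀ v₀ = ψ) :
    φ = patch x y ψ (φ x) (φ y) := by
  funext z
  rcases eq_or_ne z x with rfl | hzx
  · rw [patch_fst _ _ _ hne]
  · rcases eq_or_ne z y with rfl | hzy
    · rw [patch_snd _ _ _ hne]
    · rw [patch_other _ _ _ hzx hzy, ← h, patch_other _ _ _ hzx hzy]

lemma patch_base (hne : x ≠ y) {v₀ : V} (hx : ψ x = v₀) (hy : ψ y = v₀) :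
    patch x y (patch x y ψ u v) v₀ v₀ = ψ := by
  funext z
  rcases eq_or_ne z x with rfl | hzx
  · rw [patch_fst _ _ _ hne, hx]
  · rcases eq_or_ne z y with rfl | hzy
    · rw [patch_snd _ _ _ hne, hy]
    · rw [patch_other _ _ _ hzx hzy, patch_other _ _ _ hzx hzy]

end Patch

section Fiber
variable (hH : ∀ x y : W, HAdj x y → ¬ HAdj y x) (hD : ∀ x y : V, Adj x y → ¬ Adj y x)
  {S : Finset (W × W)} {x y : W} (hxy : HAdj x y) (hS : (x, y) ∉ S) (v₀ : V) (ψ : W → V)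

include hH hxy hS

lemma fiber_card_eq (hgood : ψ x = v₀ ∧ ψ y = v₀) :
    (univ.filter fun φ : W → V =>
        mixPred HAdj Adj S φ ∧ patch x y φ v₀ v₀ = ψ).card =
      ((sideA HAdj Adj S x y ψ ×ˢ sideB HAdj Adj S x y ψ).filter fun p : V × V =>
        restOK HAdj Adj S x y ψ ∧ (Adj p.1 p.2 ∨ Adj p.2 p.1)).card := by
  have hne : x ≠ y := hne_of_arc hH hxy
  apply Finset.card_bij (fun φ _ => (φ x, φ y))
  · intro φ hφ
    simp only [mem_filter, mem_univ, true_and] at hφ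
    obtain ⟨hmix, hbase⟩ := hφ
    rw [patch_repr hne hbase] at hmix
    have h2 := (pred_iff hH hxy hS ψ (φ x) (φ y)).1 hmix
    simp only [mem_filter, mem_product]
    exact ⟨⟨h2.1, h2.2.1⟩, h2.2.2.1, h2.2.2.2⟩
  · intro φ1 h1 φ2 h2 heq
    simp only [mem_filter, mem_univ, true_and] at h1 h2
    have e1 : φ1 x = φ2 x := congrArg Prod.fst heq
    have e2 : φ1 y = φ2 y := congrArg Prod.snd heq
    funext z
    rcases eq_or_ne z x with rfl | hzx
    · exact e1
    · rcases eq_or_ne z y with rfl | hzy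
      · exact e2
      · have c1 := congrFun h1.2 z
        have c2 := congrFun h2.2 z
        rw [patch_other _ _ _ hzx hzy] at c1 c2
        rw [c1, c2]
  · rintro ⟨u, v⟩ hp
    simp only [mem_filter, mem_product] at hp
    obtain ⟨⟨hu, hv⟩, hR, hor⟩ := hp
    refine ⟨patch x y ψ u v, ?_, ?_⟩
    · simp only [mem_filter, mem_univ, true_and]
      exact ⟨(pred_iff hH hxy hS ψ u v).2 ⟨hu, hv, hR, hor⟩,
        patch_base ψ u v hne hgood.1 hgood.2⟩
    · rw [patch_fst _ _ _ hne, patch_snd _ _ _ hne]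

lemma fiber_card_eq' (hgood : ψ x = v₀ ∧ ψ y = v₀) :
    (univ.filter fun φ : W → V =>
        mixPred HAdj Adj (insert (x, y) S) φ ∧ patch x y φ v₀ v₀ = ψ).card =
      ((sideA HAdj Adj S x y ψ ×ˢ sideB HAdj Adj S x y ψ).filter fun p : V × V =>
        restOK HAdj Adj S x y ψ ∧ Adj p.1 p.2).card := by
  have hne : x ≠ y := hne_of_arc hH hxy
  apply Finset.card_bij (fun φ _ => (φ x, φ y))
  · intro φ hφ
    simp only [mem_filter, mem_univ, true_and] at hφ
    obtain ⟨hmix, hbase⟩ := hφ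
    rw [patch_repr hne hbase] at hmix
    have h2 := (pred_iff' hH hxy hS ψ (φ x) (φ y)).1 hmix
    simp only [mem_filter, mem_product]
    exact ⟨⟨h2.1, h2.2.1⟩, h2.2.2.1, h2.2.2.2⟩
  · intro φ1 h1 φ2 h2 heq
    simp only [mem_filter, mem_univ, true_and] at h1 h2
    have e1 : φ1 x = φ2 x := congrArg Prod.fst heq
    have e2 : φ1 y = φ2 y := congrArg Prod.snd heq
    funext z
    rcases eq_or_ne z x with rfl | hzx
    · exact e1
    · rcases eq_or_ne z y with rfl | hzy
      · exact e2
      · have c1 := congrFun h1.2 z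
        have c2 := congrFun h2.2 z
        rw [patch_other _ _ _ hzx hzy] at c1 c2
        rw [c1, c2]
  · rintro ⟨u, v⟩ hp
    simp only [mem_filter, mem_product] at hp
    obtain ⟨⟨hu, hv⟩, hR, hadj⟩ := hp
    refine ⟨patch x y ψ u v, ?_, ?_⟩
    · simp only [mem_filter, mem_univ, true_and]
      exact ⟨(pred_iff' hH hxy hS ψ u v).2 ⟨hu, hv, hR, hadj⟩,
        patch_base ψ u v hne hgood.1 hgood.2⟩
    · rw [patch_fst _ _ _ hne, patch_snd _ _ _ hne]

include hD

lemma fiber_card_le :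
    (univ.filter fun φ : W → V =>
        mixPred HAdj Adj S φ ∧ patch x y φ v₀ v₀ = ψ).card ≤
      3 * (univ.filter fun φ : W → V =>
        mixPred HAdj Adj (insert (x, y) S) φ ∧ patch x y φ v₀ v₀ = ψ).card +
      (if ψ x = v₀ ∧ ψ y = v₀ then bias Adj else 0) := by
  have hne : x ≠ y := hne_of_arc hH hxy
  by_cases hgood : ψ x = v₀ ∧ ψ y = v₀
  · rw [fiber_card_eq hH hxy hS v₀ ψ hgood, fiber_card_eq' hH hxy hS v₀ ψ hgood, if_pos hgood]
    by_cases hR : restOK HAdj Adj S x y ψ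
    · have h1 : ((sideA HAdj Adj S x y ψ ×ˢ sideB HAdj Adj S x y ψ).filter fun p =>
          restOK HAdj Adj S x y ψ ∧ (Adj p.1 p.2 ∨ Adj p.2 p.1)) =
          ((sideA HAdj Adj S x y ψ ×ˢ sideB HAdj Adj S x y ψ).filter fun p =>
            (Adj p.1 p.2 ∨ Adj p.2 p.1)) := by
        apply filter_congr; intro p _; simp [hR]
      have h2 : ((sideA HAdj Adj S x y ψ ×ˢ sideB HAdj Adj S x y ψ).filter fun p =>
          restOK HAdj Adj S x y ψ ∧ Adj p.1 p.2) =
          ((sideA HAdj Adj S x y ψ ×ˢ sideB HAdj Adj S x y ψ).filter fun p =>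
            Adj p.1 p.2) := by
        apply filter_congr; intro p _; simp [hR]
      rw [h1, h2, arcs_swap Adj hD]
      have h3 : ((sideA HAdj Adj S x y ψ ×ˢ sideB HAdj Adj S x y ψ).filter fun p =>
          Adj p.1 p.2).card = arcsFrom Adj (sideA HAdj Adj S x y ψ) (sideB HAdj Adj S x y ψ) :=
        rfl
      rw [h3]
      have := bias_key Adj (sideA HAdj Adj S x y ψ) (sideB HAdj Adj S x y ψ)
      omega
    · have h1 : ((sideA HAdj Adj S x y ψ ×ˢ sideB HAdj Adj S x y ψ).filter fun p =>
          restOK HAdj Adj S x y ψ ∧ (Adj p.1 p.2 ∨ Adj p.2 p.1)) = ∅ := by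
        apply filter_eq_empty_iff.2; intro p _; exact fun h => hR h.1
      rw [h1]
      simp
  · have h1 : (univ.filter fun φ : W → V =>
        mixPred HAdj Adj S φ ∧ patch x y φ v₀ v₀ = ψ) = ∅ := by
      apply filter_eq_empty_iff.2
      intro φ _
      rintro ⟨-, hbase⟩
      apply hgood
      constructor
      · rw [← hbase, patch_fst _ _ _ hne]
      · rw [← hbase, patch_snd _ _ _ hne]
    rw [h1]
    simp

end Fiber

lemma card_good {x y : W} (hne : x ≠ y) (v₀ : V) :
    (univ.filter fun ψ : W → V => ψ x = v₀ ∧ ψ y = v₀).card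
      = Fintype.card V ^ (Fintype.card W - 2) := by
  have h1 : (univ.filter fun ψ : W → V => ψ x = v₀ ∧ ψ y = v₀).card
      = Fintype.card ({z : W // z ≠ x ∧ z ≠ y} → V) := by
    rw [← Finset.card_univ]
    apply Finset.card_bij (fun ψ _ => fun z : {z : W // z ≠ x ∧ z ≠ y} => ψ z.1)
    · intro ψ _; exact mem_univ _
    · intro ψ1 h1 ψ2 h2 heq
      simp only [mem_filter, mem_univ, true_and] at h1 h2
      funext z
      rcases eq_or_ne z x with rfl | hzx
      · rw [h1.1, h2.1]
      · rcases eq_or_ne z y with rfl | hzy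
        · rw [h1.2, h2.2]
        · exact congrFun heq ⟨z, hzx, hzy⟩
    · intro g _
      refine ⟨fun z => if hx : z = x then v₀ else if hy : z = y then v₀ else g ⟨z, hx, hy⟩,
        ?_, ?_⟩
      · simp [mem_filter, Ne.symm hne]
      · funext z
        obtain ⟨z, hzx, hzy⟩ := z
        simp only
        rw [dif_neg hzx, dif_neg hzy]
  rw [h1, Fintype.card_fun]
  congr 1
  rw [Fintype.card_subtype]
  have h2 : univ.filter (fun z : W => z ≠ x ∧ z ≠ y) = univ \ {x, y} := by
    ext z; simp [not_or]
  rw [h2, card_sdiff_of_subset (subset_univ _), Finset.card_univ]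
  congr 1
  rw [Finset.card_insert_of_notMem (by simp [hne]), Finset.card_singleton]

section Step
variable (hH : ∀ x y : W, HAdj x y → ¬ HAdj y x) (hD : ∀ x y : V, Adj x y → ¬ Adj y x)
  {S : Finset (W × W)} {x y : W} (hxy : HAdj x y) (hS : (x, y) ∉ S)

include hH hD hxy hS

lemma step_ineq (v₀ : V) :
    mixCount HAdj Adj S ≤ 3 * mixCount HAdj Adj (insert (x, y) S) +
      bias Adj * Fintype.card V ^ (Fintype.card W - 2) := by
  have hne : x ≠ y := hne_of_arc hH hxy
  have hdec : ∀ T : Finset (W × W), mixCount HAdj Adj T =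
      ∑ ψ : W → V, (univ.filter fun φ : W → V =>
        mixPred HAdj Adj T φ ∧ patch x y φ v₀ v₀ = ψ).card := by
    intro T
    rw [mixCount, Finset.card_eq_sum_card_fiberwise
      (f := fun φ => patch x y φ v₀ v₀) (t := univ) (fun φ _ => mem_univ _)]
    apply Finset.sum_congr rfl
    intro ψ _
    rw [Finset.filter_filter]
  rw [hdec S, hdec (insert (x, y) S)]
  calc
    ∑ ψ : W → V, (univ.filter fun φ : W → V =>
        mixPred HAdj Adj S φ ∧ patch x y φ v₀ v₀ = ψ).card
      ≤ ∑ ψ : W → V, (3 * (univ.filter fun φ : W → V =>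
          mixPred HAdj Adj (insert (x, y) S) φ ∧ patch x y φ v₀ v₀ = ψ).card +
          (if ψ x = v₀ ∧ ψ y = v₀ then bias Adj else 0)) :=
      Finset.sum_le_sum fun ψ _ => fiber_card_le hH hD hxy hS v₀ ψ
    _ = 3 * ∑ ψ : W → V, (univ.filter fun φ : W → V =>
          mixPred HAdj Adj (insert (x, y) S) φ ∧ patch x y φ v₀ v₀ = ψ).card +
        ∑ ψ : W → V, (if ψ x = v₀ ∧ ψ y = v₀ then bias Adj else 0) := by
      rw [Finset.sum_add_distrib, Finset.mul_sum]
    _ = _ := by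
      congr 1
      rw [Finset.sum_ite, Finset.sum_const, Finset.sum_const_zero, add_zero, smul_eq_mul,
        card_good hne v₀, mul_comm]

end Step

lemma mixCount_empty : mixCount HAdj Adj ∅ = homBarCount HAdj Adj := by
  rw [mixCount, homBarCount]
  congr 1
  apply filter_congr
  intro φ _
  constructor
  · intro h a b hab
    exact (h (a, b) hab).2 (notMem_empty _)
  · intro h p hp
    exact ⟨fun c => absurd c (notMem_empty _), fun _ => h p.1 p.2 hp⟩

lemma mixCount_full {S : Finset (W × W)} (hsub : ∀ p : W × W, HAdj p.1 p.2 → p ∈ S) :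
    mixCount HAdj Adj S = homCount HAdj Adj := by
  rw [mixCount, homCount]
  congr 1
  apply filter_congr
  intro φ _
  constructor
  · intro h a b hab
    exact (h (a, b) hab).1 (hsub _ hab)
  · intro h p hp
    exact ⟨fun _ => h p.1 p.2 hp, fun _ => Or.inl (h p.1 p.2 hp)⟩

lemma mix_bound (hH : ∀ x y : W, HAdj x y → ¬ HAdj y x)
    (hD : ∀ x y : V, Adj x y → ¬ Adj y x) (v₀ : V) :
    ∀ (m : ℕ) (S : Finset (W × W)),
      ((((univ : Finset W) ×ˢ (univ : Finset W)).filter fun p : W × W => HAdj p.1 p.2) \ S).card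
          = m →
      (mixCount HAdj Adj S : ℝ) ≤ 3 ^ m * homCount HAdj Adj +
        ((3 : ℝ) ^ m - 1) / 2 *
          (bias Adj * (Fintype.card V : ℝ) ^ (Fintype.card W - 2)) := by
  intro m
  induction m with
  | zero =>
    intro S hcard
    have hsub : ∀ p : W × W, HAdj p.1 p.2 → p ∈ S := by
      intro p hp
      by_contra hns
      have hmem : p ∈ ((((univ : Finset W) ×ˢ (univ : Finset W)).filter
          fun p : W × W => HAdj p.1 p.2) \ S) := by
        simp [mem_sdiff, mem_filter, mem_product, hp, hns]
      rw [Finset.card_eq_zero] at hcard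
      rw [hcard] at hmem
      exact absurd hmem (notMem_empty _)
    rw [mixCount_full hsub]
    simp
  | succ m ih =>
    intro S hcard
    have hpos : 0 < ((((univ : Finset W) ×ˢ (univ : Finset W)).filter
        fun p : W × W => HAdj p.1 p.2) \ S).card := by omega
    obtain ⟨a, ha⟩ := Finset.card_pos.mp hpos
    obtain ⟨x, y⟩ := a
    have ha' := ha
    rw [mem_sdiff, mem_filter] at ha'
    have hxy : HAdj x y := ha'.1.2
    have hS : (x, y) ∉ S := ha'.2
    have hstep := step_ineq hH hD hxy hS v₀
    have hcard' : ((((univ : Finset W) ×ˢ (univ : Finset W)).filter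
        fun p : W × W => HAdj p.1 p.2) \ insert (x, y) S).card = m := by
      rw [Finset.sdiff_insert, Finset.card_erase_of_mem ha, hcard]
      rfl
    have hih := ih (insert (x, y) S) hcard'
    have hstepR : (mixCount HAdj Adj S : ℝ) ≤
        3 * (mixCount HAdj Adj (insert (x, y) S) : ℝ) +
          (bias Adj : ℝ) * (Fintype.card V : ℝ) ^ (Fintype.card W - 2) := by
      exact_mod_cast hstep
    have hb : (0 : ℝ) ≤ (bias Adj : ℝ) * (Fintype.card V : ℝ) ^ (Fintype.card W - 2) := by
      positivity
    have h3 : (3 : ℝ) ^ (m + 1) = 3 * 3 ^ m := by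
      rw [pow_succ]; ring
    rw [h3]
    linarith

theorem stmt4' (hH : ∀ x y : W, HAdj x y → ¬ HAdj y x)
    (hD : ∀ x y : V, Adj x y → ¬ Adj y x)
    (ε : ℝ) (hε : 0 < ε)
    (hbias : (bias Adj : ℝ) < ε * (Fintype.card V : ℝ) ^ 2) :
    (homCount HAdj Adj : ℝ) ≥
      (homBarCount HAdj Adj : ℝ) / 3 ^ numArcs HAdj -
        ε / 2 * (Fintype.card V : ℝ) ^ Fintype.card W := by
  have hVne : Nonempty V := by
    by_contra h
    rw [not_nonempty_iff] at h
    rw [Fintype.card_eq_zero] at hbias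
    have : (0 : ℝ) ≤ (bias Adj : ℝ) := Nat.cast_nonneg _
    simp at hbias
    linarith
  obtain ⟨v₀⟩ := hVne
  have hns : ((((univ : Finset W) ×ˢ (univ : Finset W)).filter
      fun p : W × W => HAdj p.1 p.2) \ ∅).card = numArcs HAdj := by
    rw [Finset.sdiff_empty]
    rfl
  have hkey := mix_bound hH hD v₀ (numArcs HAdj) ∅ hns
  rw [mixCount_empty] at hkey
  set n := Fintype.card V with hn
  set k := Fintype.card W with hk
  set e := numArcs HAdj with he
  have h3pos : (0 : ℝ) < 3 ^ e := by positivity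
  rw [ge_iff_le, sub_le_iff_le_add, div_le_iff₀ h3pos]
  have hexp : ((homCount HAdj Adj : ℝ) + ε / 2 * (n : ℝ) ^ k) * 3 ^ e =
      3 ^ e * (homCount HAdj Adj : ℝ) + 3 ^ e * (ε / 2 * (n : ℝ) ^ k) := by ring
  rw [hexp]
  have hcoef : ((3 : ℝ) ^ e - 1) / 2 * ((bias Adj : ℝ) * (n : ℝ) ^ (k - 2)) ≤
      3 ^ e * (ε / 2 * (n : ℝ) ^ k) := by
    rcases Nat.eq_zero_or_pos e with he0 | hepos
    · rw [he0]
      simp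
      positivity
    · -- there is an arc, so k ≥ 2
      have harc : 0 < ((((univ : Finset W) ×ˢ (univ : Finset W)).filter
          fun p : W × W => HAdj p.1 p.2)).card := hepos
      obtain ⟨a, ha⟩ := Finset.card_pos.mp harc
      obtain ⟨x, y⟩ := a
      rw [mem_filter] at ha
      have hxy : HAdj x y := ha.2
      have hne : x ≠ y := hne_of_arc hH hxy
      have hk2 : 2 ≤ k := by
        rw [hk]
        exact Fintype.one_lt_card_iff_nontrivial.mpr ⟨⟨x, y, hne⟩⟩
      have hpow : (n : ℝ) ^ (k - 2) * (n : ℝ) ^ 2 = (n : ℝ) ^ k := by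
        rw [← pow_add, Nat.sub_add_cancel hk2]
      have hBB : (bias Adj : ℝ) * (n : ℝ) ^ (k - 2) ≤ ε * (n : ℝ) ^ k := by
        calc (bias Adj : ℝ) * (n : ℝ) ^ (k - 2)
            ≤ (ε * (n : ℝ) ^ 2) * (n : ℝ) ^ (k - 2) :=
              mul_le_mul_of_nonneg_right hbias.le (by positivity)
          _ = ε * ((n : ℝ) ^ (k - 2) * (n : ℝ) ^ 2) := by ring
          _ = ε * (n : ℝ) ^ k := by rw [hpow]
      have hB0 : (0 : ℝ) ≤ (bias Adj : ℝ) * (n : ℝ) ^ (k - 2) := by positivity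
      have hprod : (0 : ℝ) ≤ 3 ^ e * (ε * (n : ℝ) ^ k - (bias Adj : ℝ) * (n : ℝ) ^ (k - 2)) :=
        mul_nonneg h3pos.le (sub_nonneg.2 hBB)
      nlinarith [hprod, hB0, h3pos]
  linarith
end Aux

/-- If `H` is an oriented graph on `k` vertices and `D` an oriented graph on `n` vertices
with `bias(D) < ε n^2`, then `hom(H,D) ≥ hom(H̄,D)/3^{e(H)} - (ε/2) n^k`. -/
theorem stmt4 {W V : Type*} [Fintype W] [DecidableEq W] [Fintype V] [DecidableEq V]
    (HAdj : W → W → Prop) [DecidableRel HAdj] (Adj : V → V → Prop) [DecidableRel Adj]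
    (hH : ∀ x y : W, HAdj x y → ¬ HAdj y x) (hD : ∀ x y : V, Adj x y → ¬ Adj y x)
    (ε : ℝ) (hε : 0 < ε)
    (hbias : (bias Adj : ℝ) < ε * (Fintype.card V : ℝ) ^ 2) :
    (homCount HAdj Adj : ℝ) ≥
      (homBarCount HAdj Adj : ℝ) / 3 ^ numArcs HAdj -
        ε / 2 * (Fintype.card V : ℝ) ^ Fintype.card W := by
  exact stmt4' (HAdj := HAdj) (Adj := Adj) hH hD ε hε hbias
end

section
/- Let D be an oriented graph with e(D) arcs in which every vertex has out-degree at most Δ⁺, where Δ⁺ ≥ 1. Then ow(D) ≥ e(D)/(4·Δ⁺). -/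
open Finset

/-- `ow(D) = max { e(A,B) : A,B ⊆ V, e(B,A) = 0 }`. -/
def ow {V : Type*} [Fintype V] [DecidableEq V] (Adj : V → V → Prop) [DecidableRel Adj] : ℕ :=
  Finset.univ.sup fun p : Finset V × Finset V =>
    if arcsFrom Adj p.2 p.1 = 0 then arcsFrom Adj p.1 p.2 else 0

/-- Key weighted sum over all subsets: the total weight of subsets `A` containing `x`
and disjoint from `S` equals `p * q ^ |S|` when `p + q = 1` and `x ∉ S`. -/
lemma keySum {V : Type*} [Fintype V] [DecidableEq V] (p q : ℝ) (hpq : p + q = 1)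
    (x : V) (S : Finset V) (hx : x ∉ S) :
    ∑ A ∈ (Finset.univ : Finset V).powerset,
      (if x ∈ A ∧ Disjoint A S then p ^ A.card * q ^ (Finset.univ \ A).card else 0)
      = p * q ^ S.card := by
  classical
  set g : V → ℝ := fun i => if i = x then p else if i ∈ S then 0 else p with hg
  set h : V → ℝ := fun i => if i = x then 0 else q with hh
  have hterm : ∀ A ∈ (Finset.univ : Finset V).powerset,
      (∏ i ∈ A, g i) * ∏ i ∈ Finset.univ \ A, h i
        = if x ∈ A ∧ Disjoint A S then p ^ A.card * q ^ (Finset.univ \ A).card else 0 := by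
    intro A _
    by_cases hxA : x ∈ A
    · by_cases hAS : Disjoint A S
      · rw [if_pos ⟨hxA, hAS⟩]
        have h1 : ∀ i ∈ A, g i = p := by
          intro i hi
          by_cases hix : i = x
          · simp [hg, hix]
          · have : i ∉ S := Finset.disjoint_left.mp hAS hi
            simp [hg, hix, this]
        have h2 : ∀ i ∈ Finset.univ \ A, h i = q := by
          intro i hi
          have : i ≠ x := by
            rintro rfl; exact (Finset.mem_sdiff.mp hi).2 hxA
          simp [hh, this]
        rw [Finset.prod_congr rfl h1, Finset.prod_congr rfl h2,
          Finset.prod_const, Finset.prod_const]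
      · rw [if_neg (by tauto)]
        obtain ⟨i, hiA, hiS⟩ := Finset.not_disjoint_iff.mp hAS
        have hgi : g i = 0 := by
          have : i ≠ x := by rintro rfl; exact hx hiS
          simp [hg, this, hiS]
        rw [Finset.prod_eq_zero hiA hgi, zero_mul]
    · rw [if_neg (by tauto)]
      have hxmem : x ∈ Finset.univ \ A := Finset.mem_sdiff.mpr ⟨Finset.mem_univ x, hxA⟩
      rw [Finset.prod_eq_zero hxmem (by simp [hh]), mul_zero]
  rw [Finset.sum_congr rfl fun A hA => (hterm A hA).symm, ← Finset.prod_add]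
  have hgh : ∀ i : V, g i + h i = if i = x then p else if i ∈ S then q else 1 := by
    intro i
    by_cases hix : i = x
    · simp [hg, hh, hix]
    · by_cases hiS : i ∈ S <;> simp [hg, hh, hix, hiS, hpq]
  rw [Finset.prod_congr rfl fun i _ => hgh i,
    ← Finset.mul_prod_erase Finset.univ _ (Finset.mem_univ x), if_pos rfl]
  congr 1
  have hrw : ∀ i ∈ Finset.univ.erase x,
      (if i = x then p else if i ∈ S then q else 1) = if i ∈ S then q else 1 := by
    intro i hi; rw [if_neg (Finset.mem_erase.mp hi).1]
  rw [Finset.prod_congr rfl hrw, ← Finset.prod_filter]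
  have hfil : (Finset.univ.erase x).filter (· ∈ S) = S := by
    ext i
    constructor
    · intro hi; exact (Finset.mem_filter.mp hi).2
    · intro hi
      refine Finset.mem_filter.mpr ⟨Finset.mem_erase.mpr ⟨?_, Finset.mem_univ i⟩, hi⟩
      rintro rfl; exact hx hi
  rw [hfil, Finset.prod_const]

/-- If every vertex of an oriented graph `D` has out-degree at most `Δ⁺ ≥ 1`, then
`ow(D) ≥ e(D) / (4 Δ⁺)`. -/
theorem stmt9 {V : Type*} [Fintype V] [DecidableEq V]
    (Adj : V → V → Prop) [DecidableRel Adj]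
    (hasym : ∀ x y : V, Adj x y → ¬ Adj y x)
    (Δ : ℕ) (hΔ : 1 ≤ Δ)
    (hdeg : ∀ v : V, (Finset.univ.filter fun w => Adj v w).card ≤ Δ) :
    (ow Adj : ℝ) ≥ (numArcs Adj : ℝ) / (4 * (Δ : ℝ)) := by
  classical
  set p : ℝ := 1 / (2 * Δ) with hp
  have hΔR : (1:ℝ) ≤ (Δ : ℝ) := by exact_mod_cast hΔ
  have hΔ0 : (0:ℝ) < (Δ : ℝ) := by linarith
  have hp0 : 0 < p := by positivity
  have hp2 : p ≤ 1/2 := by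
    rw [hp, div_le_div_iff₀ (by linarith) (by norm_num)]
    linarith
  set q : ℝ := 1 - p with hq
  have hq0 : 0 < q := by linarith
  have hq1 : q ≤ 1 := by linarith
  have hpq : p + q = 1 := by rw [hq]; ring
  -- the set of vertices with no arc into `A`
  set B : Finset V → Finset V := fun A => Finset.univ.filter (fun y => ∀ a ∈ A, ¬ Adj y a)
    with hBdef
  have hBA : ∀ A, arcsFrom Adj (B A) A = 0 := by
    intro A
    rw [arcsFrom, Finset.card_eq_zero, Finset.filter_eq_empty_iff]
    intro z hz
    rw [Finset.mem_product] at hz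
    exact (Finset.mem_filter.mp hz.1).2 z.2 hz.2
  have how : ∀ A, arcsFrom Adj A (B A) ≤ ow Adj := by
    intro A
    have hle := Finset.le_sup (f := fun p : Finset V × Finset V =>
      if arcsFrom Adj p.2 p.1 = 0 then arcsFrom Adj p.1 p.2 else 0)
      (Finset.mem_univ (A, B A))
    simpa [ow, hBA A] using hle
  set T : Finset (V × V) := (Finset.univ ×ˢ Finset.univ).filter (fun z => Adj z.1 z.2) with hT
  have hnum : numArcs Adj = T.card := rfl
  have hcount : ∀ A : Finset V, (arcsFrom Adj A (B A) : ℝ)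
      = ∑ z ∈ T, (if z.1 ∈ A ∧ Disjoint A (Finset.univ.filter (Adj z.2 ·)) then (1:ℝ) else 0) := by
    intro A
    have hset : (A ×ˢ B A).filter (fun z => Adj z.1 z.2)
        = T.filter (fun z => z.1 ∈ A ∧ Disjoint A (Finset.univ.filter (Adj z.2 ·))) := by
      ext z
      simp only [hT, Finset.mem_filter, Finset.mem_product, Finset.mem_univ, true_and, hBdef,
        Finset.disjoint_left, Finset.mem_filter]
      tauto
    rw [arcsFrom, hset, Finset.card_filter]
    push_cast
    rfl
  set w : Finset V → ℝ := fun A => p ^ A.card * q ^ (Finset.univ \ A).card with hw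
  have hwpos : ∀ A : Finset V, 0 < w A := fun A => by positivity
  have hwsum : ∑ A ∈ (Finset.univ : Finset V).powerset, w A = 1 := by
    have h := (Finset.prod_add (fun _ : V => p) (fun _ : V => q) Finset.univ).symm
    simp only [Finset.prod_const, hpq, one_pow] at h
    simpa [hw] using h
  have havg : (numArcs Adj : ℝ) * (p * q ^ Δ)
      ≤ ∑ A ∈ (Finset.univ : Finset V).powerset, w A * (arcsFrom Adj A (B A) : ℝ) := by
    calc (numArcs Adj : ℝ) * (p * q ^ Δ) = ∑ _z ∈ T, (p * q ^ Δ) := by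
          rw [Finset.sum_const, nsmul_eq_mul, hnum]
      _ ≤ ∑ z ∈ T, p * q ^ ((Finset.univ.filter (Adj z.2 ·)).card) := by
          apply Finset.sum_le_sum
          intro z _
          exact mul_le_mul_of_nonneg_left
            (pow_le_pow_of_le_one hq0.le hq1 (hdeg z.2)) hp0.le
      _ = ∑ z ∈ T, ∑ A ∈ (Finset.univ : Finset V).powerset,
            (if z.1 ∈ A ∧ Disjoint A (Finset.univ.filter (Adj z.2 ·)) then
              p ^ A.card * q ^ (Finset.univ \ A).card else 0) := by
          apply Finset.sum_congr rfl
          intro z hz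
          have hadj : Adj z.1 z.2 := (Finset.mem_filter.mp hz).2
          have hx1 : z.1 ∉ Finset.univ.filter (Adj z.2 ·) := by
            simp [hasym z.1 z.2 hadj]
          rw [keySum p q hpq z.1 _ hx1]
      _ = ∑ A ∈ (Finset.univ : Finset V).powerset, w A * (arcsFrom Adj A (B A) : ℝ) := by
          rw [Finset.sum_comm]
          apply Finset.sum_congr rfl
          intro A _
          rw [hcount A, Finset.mul_sum]
          apply Finset.sum_congr rfl
          intro z _
          simp only [hw, mul_ite, mul_one, mul_zero]
  have hDp : (Δ : ℝ) * p = 1/2 := by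
    rw [hp]; field_simp
  have hbern : (1:ℝ)/2 ≤ q ^ Δ := by
    have h := one_add_mul_le_pow (a := -p) (by linarith) Δ
    have hq' : (1 : ℝ) + -p = q := by rw [hq]; ring
    rw [hq'] at h
    nlinarith [h]
  have hkey : (numArcs Adj : ℝ) / (4 * (Δ : ℝ)) ≤ (numArcs Adj : ℝ) * (p * q ^ Δ) := by
    rw [div_eq_mul_inv]
    apply mul_le_mul_of_nonneg_left _ (Nat.cast_nonneg _)
    have h1 : p * (1/2) ≤ p * q ^ Δ := mul_le_mul_of_nonneg_left hbern hp0.le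
    have h2 : (4 * (Δ:ℝ))⁻¹ = p * (1/2) := by
      rw [hp]; field_simp; ring
    linarith
  have hne : ((Finset.univ : Finset V).powerset).Nonempty :=
    ⟨∅, Finset.empty_mem_powerset _⟩
  have hsum : ∑ A ∈ (Finset.univ : Finset V).powerset, w A * ((numArcs Adj : ℝ) / (4 * (Δ : ℝ)))
      ≤ ∑ A ∈ (Finset.univ : Finset V).powerset, w A * (arcsFrom Adj A (B A) : ℝ) := by
    rw [← Finset.sum_mul, hwsum, one_mul]
    exact le_trans hkey havg
  obtain ⟨A, _, hA⟩ := Finset.exists_le_of_sum_le hne hsum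
  have hcA : (numArcs Adj : ℝ) / (4 * (Δ : ℝ)) ≤ (arcsFrom Adj A (B A) : ℝ) :=
    le_of_mul_le_mul_left hA (hwpos A)
  have howA : (arcsFrom Adj A (B A) : ℝ) ≤ (ow Adj : ℝ) := by exact_mod_cast how A
  exact le_trans hcA howA
end

section
/- Every oriented graph D satisfies ow(D) ≥ √(e(D))/2, where e(D) is the number of arcs of D. -/
open Finset

section Aux

set_option linter.unusedSectionVars false

variable {V : Type*} [Fintype V] [DecidableEq V] (Adj : V → V → Prop) [DecidableRel Adj]

/-- The set of vertices sending no arc into `A`. -/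
def owAllowed (A : Finset V) : Finset V :=
  univ.filter fun y => ∀ a ∈ A, ¬ Adj y a

lemma arcsFrom_owAllowed_eq_zero (A : Finset V) :
    arcsFrom Adj (owAllowed Adj A) A = 0 := by
  unfold arcsFrom
  rw [card_eq_zero, eq_empty_iff_forall_notMem]
  rintro ⟨x, y⟩ hp
  simp only [mem_filter, mem_product, owAllowed, mem_univ, true_and] at hp
  exact hp.1.1 y hp.1.2 hp.2

lemma arcsFrom_owAllowed_le_ow (A : Finset V) :
    arcsFrom Adj A (owAllowed Adj A) ≤ ow Adj := by
  have h := Finset.le_sup (f := fun p : Finset V × Finset V =>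
    if arcsFrom Adj p.2 p.1 = 0 then arcsFrom Adj p.1 p.2 else 0)
    (mem_univ (A, owAllowed Adj A))
  simpa [ow, arcsFrom_owAllowed_eq_zero] using h

/-- Out-degree. -/
def outDeg (y : V) : ℕ := (univ.filter fun z => Adj y z).card

lemma outDeg_le_ow (hasym : ∀ x y : V, Adj x y → ¬ Adj y x) (y : V) :
    outDeg Adj y ≤ ow Adj := by
  refine le_trans ?_ (arcsFrom_owAllowed_le_ow Adj {y})
  unfold outDeg arcsFrom
  apply Finset.card_le_card_of_injOn (fun z => (y, z))
  · intro z hz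
    have hz' : Adj y z := by
      simpa using (Finset.mem_filter.mp hz).2
    refine Finset.mem_filter.mpr ⟨Finset.mem_product.mpr ⟨Finset.mem_singleton.mpr rfl, ?_⟩, hz'⟩
    refine Finset.mem_filter.mpr ⟨mem_univ z, ?_⟩
    intro a ha
    rw [Finset.mem_singleton] at ha
    rw [ha]
    exact hasym y z hz'
  · intro a _ b _ h
    simpa using congrArg Prod.snd h

/-- The set of all arcs as a finset of pairs. -/
def arcPairs : Finset (V × V) := (univ ×ˢ univ).filter fun p => Adj p.1 p.2

lemma numArcs_eq : numArcs Adj = (arcPairs Adj).card := rfl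

lemma arcsFrom_eq_sum (A B : Finset V) :
    (arcsFrom Adj A B : ℝ) =
      ∑ e ∈ arcPairs Adj, (if e.1 ∈ A ∧ e.2 ∈ B then (1 : ℝ) else 0) := by
  have hset : ((A ×ˢ B).filter fun p => Adj p.1 p.2)
      = (arcPairs Adj).filter (fun e => e.1 ∈ A ∧ e.2 ∈ B) := by
    ext ⟨x, y⟩
    simp only [arcPairs, mem_filter, mem_product, mem_univ, true_and]
    tauto
  rw [arcsFrom, hset, Finset.sum_boole]

lemma weight_sum_one (p q : ℝ) (hpq : p + q = 1) :
    ∑ A ∈ (univ : Finset V).powerset,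
      p ^ A.card * q ^ ((univ : Finset V).card - A.card) = 1 := by
  calc ∑ A ∈ (univ : Finset V).powerset,
        p ^ A.card * q ^ ((univ : Finset V).card - A.card)
      = ∑ A ∈ (univ : Finset V).powerset, (∏ _v ∈ A, p) * ∏ _v ∈ univ \ A, q := by
        refine Finset.sum_congr rfl fun A hA => ?_
        rw [mem_powerset] at hA
        rw [Finset.prod_const, Finset.prod_const, card_sdiff_of_subset hA]
    _ = ∏ _v ∈ (univ : Finset V), (p + q) := (Finset.prod_add _ _ _).symm
    _ = 1 := by rw [Finset.prod_const, hpq, one_pow]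

lemma arc_weight_sum (hasym : ∀ x y : V, Adj x y → ¬ Adj y x)
    (p q : ℝ) (hpq : p + q = 1) {x y : V} (hxy : Adj x y) :
    ∑ A ∈ (univ : Finset V).powerset,
      p ^ A.card * q ^ ((univ : Finset V).card - A.card) *
        (if x ∈ A ∧ y ∈ owAllowed Adj A then (1 : ℝ) else 0)
      = p * q ^ outDeg Adj y := by
  set f : V → ℝ := fun v => if Adj y v then 0 else p with hf
  set g : V → ℝ := fun v => if v = x then 0 else q with hg
  have hyx : ¬ Adj y x := hasym x y hxy
  have step1 : ∀ A ∈ (univ : Finset V).powerset,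
      p ^ A.card * q ^ ((univ : Finset V).card - A.card) *
        (if x ∈ A ∧ y ∈ owAllowed Adj A then (1 : ℝ) else 0)
      = (∏ v ∈ A, f v) * ∏ v ∈ univ \ A, g v := by
    intro A hA
    rw [mem_powerset] at hA
    by_cases h1 : ∃ a ∈ A, Adj y a
    · obtain ⟨a, haA, hya⟩ := h1
      have hfa : f a = 0 := by simp [hf, hya]
      have hyA : y ∉ owAllowed Adj A := by
        simp only [owAllowed, mem_filter, mem_univ, true_and, not_forall]
        exact ⟨a, haA, not_not_intro hya⟩
      rw [Finset.prod_eq_zero haA hfa]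
      simp [hyA]
    · push_neg at h1
      by_cases h2 : x ∈ A
      · have hyA : y ∈ owAllowed Adj A := by
          simp only [owAllowed, mem_filter, mem_univ, true_and]
          exact h1
        rw [if_pos ⟨h2, hyA⟩]
        have hfA : ∏ v ∈ A, f v = p ^ A.card := by
          rw [← Finset.prod_const]
          exact Finset.prod_congr rfl fun v hv => by simp [hf, h1 v hv]
        have hgA : ∏ v ∈ univ \ A, g v = q ^ ((univ : Finset V).card - A.card) := by
          rw [← card_sdiff_of_subset hA, ← Finset.prod_const]
          refine Finset.prod_congr rfl fun v hv => ?_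
          have hne : v ≠ x := by
            rintro rfl
            exact (Finset.mem_sdiff.mp hv).2 h2
          simp [hg, hne]
        rw [hfA, hgA]; ring
      · have hx : x ∈ univ \ A := Finset.mem_sdiff.mpr ⟨mem_univ x, h2⟩
        have hgx : g x = 0 := by simp [hg]
        rw [Finset.prod_eq_zero hx hgx]
        simp [h2]
  rw [Finset.sum_congr rfl step1, ← Finset.prod_add f g univ]
  have hxval : f x + g x = p := by simp [hf, hg, hyx]
  rw [← Finset.mul_prod_erase univ _ (mem_univ x), hxval]
  have hsub : (univ.filter fun z => Adj y z) ⊆ univ.erase x := by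
    intro v hv
    simp only [mem_filter, mem_univ, true_and] at hv
    refine Finset.mem_erase.mpr ⟨?_, mem_univ v⟩
    rintro rfl; exact hyx hv
  rw [← Finset.prod_sdiff hsub]
  have h2 : ∏ v ∈ univ.filter (fun z => Adj y z), (f v + g v) = q ^ outDeg Adj y := by
    rw [outDeg, ← Finset.prod_const]
    refine Finset.prod_congr rfl fun v hv => ?_
    simp only [mem_filter, mem_univ, true_and] at hv
    have hvx : v ≠ x := by rintro rfl; exact hyx hv
    simp [hf, hg, hv, hvx]
  have h3 : ∏ v ∈ (univ.erase x) \ (univ.filter fun z => Adj y z), (f v + g v) = 1 := by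
    refine Finset.prod_eq_one fun v hv => ?_
    rw [Finset.mem_sdiff, Finset.mem_erase] at hv
    have hvx : v ≠ x := hv.1.1
    have hyv : ¬ Adj y v := by
      intro h; exact hv.2 (by simp [mem_filter, h])
    simp [hf, hg, hvx, hyv, hpq]
  rw [h2, h3]; ring

lemma main_ineq (hasym : ∀ x y : V, Adj x y → ¬ Adj y x)
    (p q : ℝ) (hp : 0 ≤ p) (hq : 0 ≤ q) (hpq : p + q = 1) :
    (numArcs Adj : ℝ) * (p * q ^ ow Adj) ≤ (ow Adj : ℝ) := by
  have hq1 : q ≤ 1 := by linarith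
  set S : ℝ := ∑ A ∈ (univ : Finset V).powerset,
      p ^ A.card * q ^ ((univ : Finset V).card - A.card) *
        (arcsFrom Adj A (owAllowed Adj A) : ℝ) with hS
  have hwnonneg : ∀ A : Finset V,
      (0:ℝ) ≤ p ^ A.card * q ^ ((univ : Finset V).card - A.card) :=
    fun A => mul_nonneg (pow_nonneg hp _) (pow_nonneg hq _)
  have upper : S ≤ (ow Adj : ℝ) := by
    have hle : S ≤ ∑ A ∈ (univ : Finset V).powerset,
        p ^ A.card * q ^ ((univ : Finset V).card - A.card) * (ow Adj : ℝ) := by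
      refine Finset.sum_le_sum fun A _ => ?_
      refine mul_le_mul_of_nonneg_left ?_ (hwnonneg A)
      exact_mod_cast arcsFrom_owAllowed_le_ow Adj A
    rw [← Finset.sum_mul, weight_sum_one p q hpq, one_mul] at hle
    exact hle
  have lower : (numArcs Adj : ℝ) * (p * q ^ ow Adj) ≤ S := by
    have hSeq : S = ∑ e ∈ arcPairs Adj, p * q ^ outDeg Adj e.2 := by
      rw [hS]
      have hrw : ∀ A ∈ (univ : Finset V).powerset,
          p ^ A.card * q ^ ((univ : Finset V).card - A.card) *
            (arcsFrom Adj A (owAllowed Adj A) : ℝ)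
          = ∑ e ∈ arcPairs Adj, p ^ A.card * q ^ ((univ : Finset V).card - A.card) *
              (if e.1 ∈ A ∧ e.2 ∈ owAllowed Adj A then (1:ℝ) else 0) := by
        intro A _
        rw [arcsFrom_eq_sum, Finset.mul_sum]
      rw [Finset.sum_congr rfl hrw, Finset.sum_comm]
      refine Finset.sum_congr rfl fun e he => ?_
      have hadj : Adj e.1 e.2 := by
        have := (Finset.mem_filter.mp he).2
        exact this
      exact arc_weight_sum Adj hasym p q hpq hadj
    rw [hSeq, numArcs_eq, ← nsmul_eq_mul, ← Finset.sum_const]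
    refine Finset.sum_le_sum fun e he => ?_
    have hadj : Adj e.1 e.2 := (Finset.mem_filter.mp he).2
    refine mul_le_mul_of_nonneg_left ?_ hp
    exact pow_le_pow_of_le_one hq hq1 (outDeg_le_ow Adj hasym e.2)
  linarith

lemma ow_pos_of_arc (hasym : ∀ x y : V, Adj x y → ¬ Adj y x)
    (h : numArcs Adj ≠ 0) : 1 ≤ ow Adj := by
  rw [numArcs_eq, ← Nat.pos_iff_ne_zero, Finset.card_pos] at h
  obtain ⟨e, he⟩ := h
  have hadj : Adj e.1 e.2 := (Finset.mem_filter.mp he).2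
  have h1 : 1 ≤ outDeg Adj e.1 := by
    rw [Nat.one_le_iff_ne_zero, ← Nat.pos_iff_ne_zero, outDeg, Finset.card_pos]
    exact ⟨e.2, by simp [hadj]⟩
  exact le_trans h1 (outDeg_le_ow Adj hasym e.1)

end Aux

/-- Every oriented graph `D` satisfies `ow(D) ≥ √(e(D)) / 2`. -/
theorem stmt10 {V : Type*} [Fintype V] [DecidableEq V]
    (Adj : V → V → Prop) [DecidableRel Adj]
    (hasym : ∀ x y : V, Adj x y → ¬ Adj y x) :
    (ow Adj : ℝ) ≥ Real.sqrt (numArcs Adj : ℝ) / 2 := by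
  by_cases hm : numArcs Adj = 0
  · rw [hm]
    simp
  · have hw : 1 ≤ ow Adj := ow_pos_of_arc Adj hasym hm
    set W : ℝ := (ow Adj : ℝ) with hWdef
    have hW1 : (1 : ℝ) ≤ W := by rw [hWdef]; exact_mod_cast hw
    have hWpos : (0 : ℝ) < W := by linarith
    have hWne : W ≠ 0 := ne_of_gt hWpos
    set p : ℝ := 1 / (2 * W) with hpdef
    set q : ℝ := 1 - 1 / (2 * W) with hqdef
    have hppos : 0 < p := by rw [hpdef]; positivity
    have hple : p ≤ 1 / 2 := by
      rw [hpdef, div_le_div_iff₀ (by positivity) (by norm_num)]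
      linarith
    have hq0 : 0 ≤ q := by rw [hqdef]; nlinarith
    have hpq : p + q = 1 := by rw [hpdef, hqdef]; ring
    have hmain := main_ineq Adj hasym p q (le_of_lt hppos) hq0 hpq
    -- Bernoulli: 1/2 ≤ q ^ (ow Adj)
    have hbern : (1 / 2 : ℝ) ≤ q ^ ow Adj := by
      have h := one_add_mul_le_pow (a := -(1 / (2 * W))) (by nlinarith) (ow Adj)
      have heq : (1 : ℝ) + (ow Adj : ℝ) * (-(1 / (2 * W))) = 1 / 2 := by
        rw [← hWdef]
        field_simp
        ring
      rw [heq] at h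
      calc (1/2 : ℝ) ≤ (1 + -(1 / (2 * W))) ^ ow Adj := h
        _ = q ^ ow Adj := by rw [hqdef]; ring_nf
    have hm4 : (numArcs Adj : ℝ) ≤ 4 * W ^ 2 := by
      have h1 : (numArcs Adj : ℝ) * (p * (1/2)) ≤ (numArcs Adj : ℝ) * (p * q ^ ow Adj) := by
        refine mul_le_mul_of_nonneg_left ?_ (by positivity)
        exact mul_le_mul_of_nonneg_left hbern (le_of_lt hppos)
      have h2 : (numArcs Adj : ℝ) * (p * (1/2)) ≤ W := le_trans h1 hmain
      rw [hpdef] at h2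
      have h3 : (numArcs Adj : ℝ) * (1 / (4 * W)) ≤ W := by
        calc (numArcs Adj : ℝ) * (1 / (4 * W))
            = (numArcs Adj : ℝ) * (1 / (2 * W) * (1/2)) := by ring
          _ ≤ W := h2
      calc (numArcs Adj : ℝ) = ((numArcs Adj : ℝ) * (1 / (4 * W))) * (4 * W) := by
            field_simp
        _ ≤ W * (4 * W) := by
            apply mul_le_mul_of_nonneg_right h3 (by positivity)
        _ = 4 * W ^ 2 := by ring
    have hsqrt : Real.sqrt (numArcs Adj : ℝ) ≤ 2 * W := by
      have h4 : (4 : ℝ) * W ^ 2 = (2 * W) ^ 2 := by ring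
      rw [h4] at hm4
      calc Real.sqrt (numArcs Adj : ℝ) ≤ Real.sqrt ((2 * W) ^ 2) :=
            Real.sqrt_le_sqrt hm4
        _ = 2 * W := Real.sqrt_sq (by positivity)
    rw [ge_iff_le]
    linarith
end

section
/- Let D be an oriented graph on n vertices with bias(D) ≤ e(D)/2. Then D contains at least e(D)^2/(8n) directed paths of length two, i.e., at least e(D)^2/(8n) ordered pairs of arcs of the form (x→y, y→u). -/
open Finset

/-- The number of directed paths of length two, i.e. triples `(x, y, u)` with arcs
`x→y` and `y→u`. -/
def pathsTwo {V : Type*} [Fintype V] (Adj : V → V → Prop) [DecidableRel Adj] : ℕ :=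
  (Finset.univ.filter fun t : V × V × V => Adj t.1 t.2.1 ∧ Adj t.2.1 t.2.2).card

lemma arcsFrom_eq {V : Type*} (Adj : V → V → Prop) [DecidableRel Adj] (A B : Finset V) :
    arcsFrom Adj A B = ∑ y ∈ B, (A.filter fun x => Adj x y).card := by
  unfold arcsFrom
  rw [Finset.card_filter, Finset.sum_product_right]
  exact Finset.sum_congr rfl fun y _ => (Finset.card_filter _ _).symm

lemma arcsFrom_eq' {V : Type*} (Adj : V → V → Prop) [DecidableRel Adj] (A B : Finset V) :
    arcsFrom Adj A B = ∑ x ∈ A, (B.filter fun y => Adj x y).card := by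
  unfold arcsFrom
  rw [Finset.card_filter, Finset.sum_product]
  exact Finset.sum_congr rfl fun x _ => (Finset.card_filter _ _).symm

lemma ite_and_mul {a b : Prop} [Decidable a] [Decidable b] :
    (if a ∧ b then (1:ℕ) else 0) = (if a then 1 else 0) * (if b then 1 else 0) := by
  by_cases a <;> by_cases b <;> simp_all

lemma pathsTwo_eq {V : Type*} [Fintype V] (Adj : V → V → Prop) [DecidableRel Adj] :
    pathsTwo Adj = ∑ y : V, (Finset.univ.filter fun x => Adj x y).card *
      (Finset.univ.filter fun u => Adj y u).card := by
  unfold pathsTwo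
  rw [Finset.card_filter, Fintype.sum_prod_type]
  simp_rw [Fintype.sum_prod_type]
  rw [Finset.sum_comm]
  refine Finset.sum_congr rfl fun y _ => ?_
  rw [Finset.card_filter, Finset.card_filter, Finset.sum_mul_sum]
  simp_rw [ite_and_mul]

/-- Every oriented graph `D` on `n` vertices with `bias(D) ≤ e(D)/2` contains at least
`e(D)^2 / (8n)` directed paths of length two. -/
theorem stmt11 {V : Type*} [Fintype V] [DecidableEq V]
    (Adj : V → V → Prop) [DecidableRel Adj]
    (hasym : ∀ x y : V, Adj x y → ¬ Adj y x)
    (hbias : (bias Adj : ℝ) ≤ (numArcs Adj : ℝ) / 2) :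
    (pathsTwo Adj : ℝ) ≥ (numArcs Adj : ℝ) ^ 2 / (8 * (Fintype.card V : ℝ)) := by
  classical
  set din : V → ℕ := fun y => (Finset.univ.filter fun x => Adj x y).card with hdin
  set dout : V → ℕ := fun y => (Finset.univ.filter fun u => Adj y u).card with hdout
  set X : Finset V := Finset.univ.filter fun y => 2 * dout y < din y with hX
  -- condition for bias at (univ, X)
  have hcond : 2 * arcsFrom Adj X Finset.univ ≤ arcsFrom Adj Finset.univ X := by
    rw [arcsFrom_eq' Adj X, arcsFrom_eq Adj _ X, Finset.mul_sum]
    refine Finset.sum_le_sum fun y hy => ?_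
    have : 2 * dout y < din y := (Finset.mem_filter.mp hy).2
    change 2 * dout y ≤ din y
    omega
  have hXbias : arcsFrom Adj Finset.univ X ≤ bias Adj := by
    have := Finset.le_sup (f := fun p : Finset V × Finset V =>
      if 2 * arcsFrom Adj p.2 p.1 ≤ arcsFrom Adj p.1 p.2 then arcsFrom Adj p.1 p.2 else 0)
      (Finset.mem_univ ((Finset.univ : Finset V), X))
    simpa [bias, hcond] using this
  have hnum : numArcs Adj = ∑ y : V, din y := arcsFrom_eq Adj _ _
  -- sum over complement of X
  have hsplit : (∑ y : V, din y) = (∑ y ∈ X, din y) + ∑ y ∈ Xᶜ, din y :=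
    (Finset.sum_add_sum_compl X _).symm
  have hXle : (∑ y ∈ X, din y : ℝ) ≤ (numArcs Adj : ℝ) / 2 := by
    refine le_trans ?_ hbias
    have : (∑ y ∈ X, din y) = arcsFrom Adj Finset.univ X := (arcsFrom_eq Adj _ X).symm
    exact_mod_cast this ▸ hXbias
  have hcomp : (numArcs Adj : ℝ) / 2 ≤ ∑ y ∈ Xᶜ, (din y : ℝ) := by
    have h1 : (numArcs Adj : ℝ) = (∑ y ∈ X, (din y : ℝ)) + ∑ y ∈ Xᶜ, (din y : ℝ) := by
      rw [hnum]; push_cast [hsplit]; ring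
    have h2 : (∑ y ∈ X, (din y : ℝ)) ≤ (numArcs Adj : ℝ) / 2 := by
      exact_mod_cast hXle
    linarith
  -- paths lower bound
  have hp2 : (∑ y ∈ Xᶜ, (din y : ℝ) ^ 2) / 2 ≤ (pathsTwo Adj : ℝ) := by
    have h1 : (pathsTwo Adj : ℝ) = ∑ y : V, (din y : ℝ) * (dout y : ℝ) := by
      rw [pathsTwo_eq]; push_cast; rfl
    have h2 : ∑ y ∈ Xᶜ, (din y : ℝ) * (dout y : ℝ) ≤ ∑ y : V, (din y : ℝ) * (dout y : ℝ) := by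
      refine Finset.sum_le_sum_of_subset_of_nonneg (Finset.subset_univ _) fun y _ _ => by positivity
    have h3 : ∑ y ∈ Xᶜ, (din y : ℝ) ^ 2 / 2 ≤ ∑ y ∈ Xᶜ, (din y : ℝ) * (dout y : ℝ) := by
      refine Finset.sum_le_sum fun y hy => ?_
      have hy' : ¬ (2 * dout y < din y) := by
        simpa [hX] using (Finset.mem_compl.mp hy)
      have : (din y : ℝ) ≤ 2 * (dout y : ℝ) := by exact_mod_cast Nat.le_of_not_lt hy'
      nlinarith [Nat.cast_nonneg (α := ℝ) (din y)]
    rw [h1]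
    calc (∑ y ∈ Xᶜ, (din y : ℝ) ^ 2) / 2 = ∑ y ∈ Xᶜ, (din y : ℝ) ^ 2 / 2 := by
          rw [Finset.sum_div]
      _ ≤ _ := le_trans h3 h2
  -- Cauchy-Schwarz
  have hcs : (∑ y ∈ Xᶜ, (din y : ℝ)) ^ 2 ≤ (Fintype.card V : ℝ) * ∑ y ∈ Xᶜ, (din y : ℝ) ^ 2 := by
    refine le_trans sq_sum_le_card_mul_sum_sq (mul_le_mul_of_nonneg_right ?_ ?_)
    · exact_mod_cast Finset.card_le_univ _
    · exact Finset.sum_nonneg fun y _ => sq_nonneg _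
  rcases Nat.eq_zero_or_pos (Fintype.card V) with hn | hn
  · have : numArcs Adj = 0 := by
      rw [hnum]
      have : (Finset.univ : Finset V) = ∅ := Finset.univ_eq_empty_iff.mpr
        (Fintype.card_eq_zero_iff.mp hn)
      simp [this]
    simp [this]
  · have hnpos : (0:ℝ) < (Fintype.card V : ℝ) := by exact_mod_cast hn
    rw [ge_iff_le, div_le_iff₀ (by positivity)]
    have he : (0:ℝ) ≤ (numArcs Adj : ℝ) := Nat.cast_nonneg _
    have h4 : ((numArcs Adj : ℝ) / 2) ^ 2 ≤ (∑ y ∈ Xᶜ, (din y : ℝ)) ^ 2 :=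
      pow_le_pow_left₀ (by positivity) hcomp 2
    nlinarith [hp2, hcs, h4]
end

section
/- Let ε > 0 and let D be an oriented graph on n vertices with bias(D) < ε·e(D)^2/n^2. Then the number of unbalanced directed paths of length two in D is at most 8ε·e(D)^2/n. -/
open Finset

/-- `d^{+-}(x,u)`: the number of directed paths of length two from `x` to `u`. -/
def dpm {V : Type*} [Fintype V] (Adj : V → V → Prop) [DecidableRel Adj] (x u : V) : ℕ :=
  (Finset.univ.filter fun y : V => Adj x y ∧ Adj y u).card

/-- The number of unbalanced directed paths of length two: triples `(x, y, u)` with arcs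
`x→y`, `y→u` such that `d^{+-}(x,u) > 16 d^{+-}(u,x)`. -/
def unbalancedPathsTwo {V : Type*} [Fintype V] (Adj : V → V → Prop) [DecidableRel Adj] : ℕ :=
  (Finset.univ.filter fun t : V × V × V =>
      Adj t.1 t.2.1 ∧ Adj t.2.1 t.2.2 ∧ 16 * dpm Adj t.2.2 t.1 < dpm Adj t.1 t.2.2).card

section Aux

set_option linter.unusedSectionVars false

variable {V : Type*} [Fintype V] [DecidableEq V] (Adj : V → V → Prop) [DecidableRel Adj]

private lemma arcs_sum_left (A B : Finset V) :
    arcsFrom Adj A B = ∑ x ∈ A, (B.filter fun y => Adj x y).card := by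
  unfold arcsFrom
  rw [Finset.card_filter, Finset.sum_product]
  exact Finset.sum_congr rfl fun x _ => (Finset.card_filter _ _).symm

private lemma arcs_sum_right (A B : Finset V) :
    arcsFrom Adj A B = ∑ y ∈ B, (A.filter fun x => Adj x y).card := by
  unfold arcsFrom
  rw [Finset.card_filter, Finset.sum_product_right]
  exact Finset.sum_congr rfl fun x _ => (Finset.card_filter _ _).symm

/-- trivial bound: for all `A B`, `e(A,B) ≤ bias + 2 e(B,A)`. -/
private lemma le_bias (A B : Finset V) :
    arcsFrom Adj A B ≤ bias Adj + 2 * arcsFrom Adj B A := by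
  by_cases h : 2 * arcsFrom Adj B A ≤ arcsFrom Adj A B
  · have hb : arcsFrom Adj A B ≤ bias Adj := by
      have := Finset.le_sup (f := fun p : Finset V × Finset V =>
        if 2 * arcsFrom Adj p.2 p.1 ≤ arcsFrom Adj p.1 p.2 then arcsFrom Adj p.1 p.2 else 0)
        (Finset.mem_univ (A, B))
      simp only [h, if_true] at this
      exact this
    omega
  · omega

/-- `q x u = |N⁻(x) ∩ N⁻(u)|`. -/
private def qq (x u : V) : ℕ := (Finset.univ.filter fun y : V => Adj y x ∧ Adj y u).card

private lemma per_u (u : V) :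
    (∑ x : V, if 16 * dpm Adj u x < dpm Adj x u then dpm Adj x u else 0)
      ≤ bias Adj + 2 * ∑ x : V, (if 16 * dpm Adj u x < dpm Adj x u then qq Adj x u else 0) := by
  have key := le_bias Adj (Finset.univ.filter fun x => 16 * dpm Adj u x < dpm Adj x u)
    (Finset.univ.filter fun y : V => Adj y u)
  have hfwd : arcsFrom Adj (Finset.univ.filter fun x => 16 * dpm Adj u x < dpm Adj x u)
      (Finset.univ.filter fun y : V => Adj y u)
      = ∑ x : V, if 16 * dpm Adj u x < dpm Adj x u then dpm Adj x u else 0 := by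
    rw [arcs_sum_left, Finset.sum_filter]
    refine Finset.sum_congr rfl fun x _ => ?_
    refine if_congr Iff.rfl ?_ rfl
    rw [Finset.filter_filter]
    unfold dpm
    exact congrArg Finset.card (Finset.filter_congr fun y _ => by tauto)
  have hbwd : arcsFrom Adj (Finset.univ.filter fun y : V => Adj y u)
      (Finset.univ.filter fun x => 16 * dpm Adj u x < dpm Adj x u)
      = ∑ x : V, if 16 * dpm Adj u x < dpm Adj x u then qq Adj x u else 0 := by
    rw [arcs_sum_right, Finset.sum_filter]
    refine Finset.sum_congr rfl fun x _ => ?_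
    refine if_congr Iff.rfl ?_ rfl
    rw [Finset.filter_filter]
    unfold qq
    exact congrArg Finset.card (Finset.filter_congr fun y _ => by tauto)
  rw [hfwd, hbwd] at key
  exact key

private lemma per_x (x : V) :
    (∑ u : V, if 16 * dpm Adj u x < dpm Adj x u then qq Adj x u else 0)
      ≤ bias Adj + 2 * ∑ u : V, (if 16 * dpm Adj u x < dpm Adj x u then dpm Adj u x else 0) := by
  have key := le_bias Adj (Finset.univ.filter fun y : V => Adj y x)
    (Finset.univ.filter fun u => 16 * dpm Adj u x < dpm Adj x u)
  have hfwd : arcsFrom Adj (Finset.univ.filter fun y : V => Adj y x)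
      (Finset.univ.filter fun u => 16 * dpm Adj u x < dpm Adj x u)
      = ∑ u : V, if 16 * dpm Adj u x < dpm Adj x u then qq Adj x u else 0 := by
    rw [arcs_sum_right, Finset.sum_filter]
    refine Finset.sum_congr rfl fun u _ => ?_
    refine if_congr Iff.rfl ?_ rfl
    rw [Finset.filter_filter]
    unfold qq
    exact congrArg Finset.card (Finset.filter_congr fun y _ => by tauto)
  have hbwd : arcsFrom Adj (Finset.univ.filter fun u => 16 * dpm Adj u x < dpm Adj x u)
      (Finset.univ.filter fun y : V => Adj y x)
      = ∑ u : V, if 16 * dpm Adj u x < dpm Adj x u then dpm Adj u x else 0 := by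
    rw [arcs_sum_left, Finset.sum_filter]
    refine Finset.sum_congr rfl fun u _ => ?_
    refine if_congr Iff.rfl ?_ rfl
    rw [Finset.filter_filter]
    unfold dpm
    exact congrArg Finset.card (Finset.filter_congr fun y _ => by tauto)
  rw [hfwd, hbwd] at key
  exact key

private lemma upt_eq :
    unbalancedPathsTwo Adj
      = ∑ u : V, ∑ x : V, if 16 * dpm Adj u x < dpm Adj x u then dpm Adj x u else 0 := by
  calc unbalancedPathsTwo Adj
      = ∑ x : V, ∑ y : V, ∑ u : V,
          (if Adj x y ∧ Adj y u ∧ 16 * dpm Adj u x < dpm Adj x u then 1 else 0) := by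
        unfold unbalancedPathsTwo
        rw [Finset.card_filter]
        simp only [Fintype.sum_prod_type]
    _ = ∑ x : V, ∑ u : V, (if 16 * dpm Adj u x < dpm Adj x u then dpm Adj x u else 0) := by
        refine Finset.sum_congr rfl fun x _ => ?_
        rw [Finset.sum_comm]
        refine Finset.sum_congr rfl fun u _ => ?_
        by_cases h : 16 * dpm Adj u x < dpm Adj x u
        · rw [if_pos h]
          simp only [h, and_true]
          unfold dpm
          rw [Finset.card_filter]
        · simp [h]
    _ = ∑ u : V, ∑ x : V, (if 16 * dpm Adj u x < dpm Adj x u then dpm Adj x u else 0) :=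
        Finset.sum_comm

private lemma key_nat :
    3 * unbalancedPathsTwo Adj ≤ 12 * (Fintype.card V * bias Adj) := by
  classical
  set S := ∑ u : V, ∑ x : V, (if 16 * dpm Adj u x < dpm Adj x u then dpm Adj x u else 0) with hS
  set Q := ∑ u : V, ∑ x : V, (if 16 * dpm Adj u x < dpm Adj x u then qq Adj x u else 0) with hQ
  set R := ∑ x : V, ∑ u : V, (if 16 * dpm Adj u x < dpm Adj x u then dpm Adj u x else 0) with hR
  have h1 : S ≤ Fintype.card V * bias Adj + 2 * Q := by
    calc S ≤ ∑ u : V, (bias Adj + 2 * ∑ x : V,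
          (if 16 * dpm Adj u x < dpm Adj x u then qq Adj x u else 0)) :=
        Finset.sum_le_sum fun u _ => per_u Adj u
      _ = Fintype.card V * bias Adj + 2 * Q := by
        rw [Finset.sum_add_distrib, Finset.sum_const, Finset.card_univ, smul_eq_mul,
          ← Finset.mul_sum]
  have h2 : Q ≤ Fintype.card V * bias Adj + 2 * R := by
    calc Q = ∑ x : V, ∑ u : V, (if 16 * dpm Adj u x < dpm Adj x u then qq Adj x u else 0) :=
        Finset.sum_comm
      _ ≤ ∑ x : V, (bias Adj + 2 * ∑ u : V,
          (if 16 * dpm Adj u x < dpm Adj x u then dpm Adj u x else 0)) :=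
        Finset.sum_le_sum fun x _ => per_x Adj x
      _ = Fintype.card V * bias Adj + 2 * R := by
        rw [Finset.sum_add_distrib, Finset.sum_const, Finset.card_univ, smul_eq_mul,
          ← Finset.mul_sum]
  have h3 : 16 * R ≤ S := by
    rw [hS, Finset.sum_comm (f := fun u x =>
      (if 16 * dpm Adj u x < dpm Adj x u then dpm Adj x u else 0)), hR, Finset.mul_sum]
    refine Finset.sum_le_sum fun x _ => ?_
    rw [Finset.mul_sum]
    refine Finset.sum_le_sum fun u _ => ?_
    by_cases h : 16 * dpm Adj u x < dpm Adj x u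
    · simp only [h, if_true]; omega
    · simp [h]
  have hU : unbalancedPathsTwo Adj = S := upt_eq Adj
  omega

end Aux

/-- If `bias(D) < ε e(D)^2 / n^2` then the number of unbalanced directed paths of length
two in `D` is at most `8 ε e(D)^2 / n`. -/
theorem stmt12 {V : Type*} [Fintype V] [DecidableEq V]
    (Adj : V → V → Prop) [DecidableRel Adj]
    (hasym : ∀ x y : V, Adj x y → ¬ Adj y x)
    (ε : ℝ) (hε : 0 < ε)
    (hbias : (bias Adj : ℝ) < ε * (numArcs Adj : ℝ) ^ 2 / (Fintype.card V : ℝ) ^ 2) :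
    (unbalancedPathsTwo Adj : ℝ) ≤
      8 * ε * (numArcs Adj : ℝ) ^ 2 / (Fintype.card V : ℝ) := by
  rcases Nat.eq_zero_or_pos (Fintype.card V) with hn | hn
  · have : IsEmpty V := Fintype.card_eq_zero_iff.mp hn
    have h0 : unbalancedPathsTwo Adj = 0 := by
      simp [unbalancedPathsTwo]
    rw [h0, hn]
    simp
  · have key := key_nat Adj
    have hkey : (unbalancedPathsTwo Adj : ℝ) ≤ 4 * (Fintype.card V : ℝ) * (bias Adj : ℝ) := by
      have h := (Nat.cast_le (α := ℝ)).mpr key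
      push_cast at h
      linarith
    have hnpos : (0:ℝ) < (Fintype.card V : ℝ) := by exact_mod_cast hn
    have h2 : 4 * (Fintype.card V : ℝ) * (bias Adj : ℝ)
        < 4 * (Fintype.card V : ℝ) * (ε * (numArcs Adj : ℝ) ^ 2 / (Fintype.card V : ℝ) ^ 2) := by
      apply mul_lt_mul_of_pos_left hbias
      positivity
    have h3 : 4 * (Fintype.card V : ℝ) * (ε * (numArcs Adj : ℝ) ^ 2 / (Fintype.card V : ℝ) ^ 2)
        = 4 * ε * (numArcs Adj : ℝ) ^ 2 / (Fintype.card V : ℝ) := by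
      field_simp
    have h4 : (0:ℝ) ≤ 4 * ε * (numArcs Adj : ℝ) ^ 2 / (Fintype.card V : ℝ) := by positivity
    have h5 : 8 * ε * (numArcs Adj : ℝ) ^ 2 / (Fintype.card V : ℝ)
        = 2 * (4 * ε * (numArcs Adj : ℝ) ^ 2 / (Fintype.card V : ℝ)) := by ring
    linarith
end

section
/- For every n ≥ 2 there exists a finite simple graph G on n vertices with at least n^{3/2}/20 edges which contains no cycle of length four. -/
open Finset

lemma key_rpow (a b : ℕ) (h : a^3 ≤ b^2) : (a:ℝ) ^ ((3:ℝ)/2) ≤ b := by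
  have ha : (0:ℝ) ≤ (a:ℝ) := Nat.cast_nonneg a
  have h1 : (a:ℝ) ^ ((3:ℝ)/2) = Real.sqrt ((a:ℝ)^3) := by
    rw [Real.sqrt_eq_rpow, ← Real.rpow_natCast ((a:ℝ)) 3, ← Real.rpow_mul ha]
    norm_num
  rw [h1]
  have h2 : ((a:ℝ))^3 ≤ ((b:ℝ))^2 := by exact_mod_cast h
  calc Real.sqrt ((a:ℝ)^3) ≤ Real.sqrt ((b:ℝ)^2) := Real.sqrt_le_sqrt h2
    _ = b := Real.sqrt_sq (Nat.cast_nonneg b)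

private def gmap (p n : ℕ) (u : Fin n) : ZMod p × ZMod p :=
  (((u : ℕ) / p : ℕ), ((u : ℕ) % p : ℕ))

private def emap (p n : ℕ) [NeZero p] (hpn : p * p ≤ n) (hp0 : 0 < p) (A : ZMod p × ZMod p) : Fin n :=
  ⟨p * A.1.val + A.2.val, by
    have h1 : A.1.val < p := ZMod.val_lt A.1
    have h2 : A.2.val < p := ZMod.val_lt A.2
    calc p * A.1.val + A.2.val < p * A.1.val + p := by omega
      _ = p * (A.1.val + 1) := by ring
      _ ≤ p * p := Nat.mul_le_mul_left p h1
      _ ≤ n := hpn⟩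

private def Qrel (p n : ℕ) (u v : Fin n) : Prop :=
  u ≠ v ∧ (u : ℕ) < p * p ∧ (v : ℕ) < p * p ∧
    (gmap p n u).2 + (gmap p n v).2 = ((gmap p n u).1 + (gmap p n v).1) ^ 2

private instance (p n : ℕ) (u v : Fin n) : Decidable (Qrel p n u v) := by
  unfold Qrel; infer_instance

section
variable {p n : ℕ} [NeZero p] (hpn : p * p ≤ n) (hp0 : 0 < p)

private lemma hge (A : ZMod p × ZMod p) : gmap p n (emap p n hpn hp0 A) = A := by
  have h2 : A.2.val < p := ZMod.val_lt A.2
  have hd : (p * A.1.val + A.2.val) / p = A.1.val := by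
    rw [Nat.mul_add_div hp0, Nat.div_eq_of_lt h2, Nat.add_zero]
  have hm : (p * A.1.val + A.2.val) % p = A.2.val := by
    rw [Nat.mul_add_mod, Nat.mod_eq_of_lt h2]
  show ((((p * A.1.val + A.2.val) / p : ℕ) : ZMod p), (((p * A.1.val + A.2.val) % p : ℕ) : ZMod p)) = A
  rw [hd, hm]
  exact Prod.ext (ZMod.natCast_rightInverse A.1) (ZMod.natCast_rightInverse A.2)

private lemma heg (u : Fin n) (hu : (u : ℕ) < p * p) : emap p n hpn hp0 (gmap p n u) = u := by
  have hdp : (u : ℕ) / p < p := Nat.div_lt_of_lt_mul (by omega)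
  have hmp : (u : ℕ) % p < p := Nat.mod_lt _ hp0
  apply Fin.ext
  show p * (((((u:ℕ)/p : ℕ)) : ZMod p)).val + (((((u:ℕ)%p : ℕ)) : ZMod p)).val = (u:ℕ)
  rw [ZMod.val_cast_of_lt hdp, ZMod.val_cast_of_lt hmp]
  exact Nat.div_add_mod (u:ℕ) p

include hpn hp0 in
private lemma ginj (u v : Fin n) (hu : (u:ℕ) < p*p) (hv : (v:ℕ) < p*p)
    (h : gmap p n u = gmap p n v) : u = v := by
  rw [← heg hpn hp0 u hu, ← heg hpn hp0 v hv, h]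

end

lemma construction (p n : ℕ) (hp : p.Prime) (hodd : p ≠ 2) (hpn : p*p ≤ n) :
    ∃ Adj : Fin n → Fin n → Bool,
      (∀ x : Fin n, Adj x x = false) ∧
      (∀ x y : Fin n, Adj x y = Adj y x) ∧
      (Finset.univ.filter fun q : Fin n × Fin n => Adj q.1 q.2 = true).card = p^3 - p ∧
      ¬ ∃ a b c d : Fin n, a ≠ b ∧ a ≠ c ∧ a ≠ d ∧ b ≠ c ∧ b ≠ d ∧ c ≠ d ∧
          Adj a b = true ∧ Adj b c = true ∧ Adj c d = true ∧ Adj d a = true := by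
  haveI : Fact p.Prime := ⟨hp⟩
  haveI : NeZero p := ⟨hp.pos.ne'⟩
  have hp0 : 0 < p := hp.pos
  have h2 : (2 : ZMod p) ≠ 0 := by
    intro hc
    have hd : p ∣ 2 := (ZMod.natCast_eq_zero_iff 2 p).mp (by exact_mod_cast hc)
    exact hodd ((Nat.prime_dvd_prime_iff_eq hp Nat.prime_two).mp hd)
  refine ⟨fun u v => decide (Qrel p n u v), ?_, ?_, ?_, ?_⟩
  · intro x
    simp only [decide_eq_false_iff_not]
    intro hc
    exact hc.1 rfl
  · intro x y
    apply decide_eq_decide.mpr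
    constructor <;> rintro ⟨h1, ha, hb, h4⟩ <;>
      exact ⟨Ne.symm h1, hb, ha, by rw [add_comm ((gmap p n _).2), add_comm ((gmap p n _).1)]; exact h4⟩
  · -- edge count
    have hfilt : (Finset.univ.filter fun q : Fin n × Fin n => decide (Qrel p n q.1 q.2) = true)
        = Finset.univ.filter fun q : Fin n × Fin n => Qrel p n q.1 q.2 := by
      apply Finset.filter_congr; intro q _; simp
    rw [hfilt]
    set Dq : Finset ((ZMod p × ZMod p) × (ZMod p × ZMod p)) :=
      Finset.univ.filter fun AB => AB.1.2 + AB.2.2 = (AB.1.1 + AB.2.1)^2 with hDq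
    have step1 : (Finset.univ.filter fun q : Fin n × Fin n => Qrel p n q.1 q.2).card
        = (Dq.filter fun AB => ¬ AB.1 = AB.2).card := by
      refine Finset.card_bij' (fun q _ => (gmap p n q.1, gmap p n q.2))
        (fun AB _ => (emap p n hpn hp0 AB.1, emap p n hpn hp0 AB.2)) ?_ ?_ ?_ ?_
      · intro q hq
        obtain ⟨h1, ha, hb, h4⟩ : Qrel p n q.1 q.2 := (Finset.mem_filter.mp hq).2
        refine Finset.mem_filter.mpr ⟨Finset.mem_filter.mpr ⟨Finset.mem_univ _, h4⟩, ?_⟩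
        intro hc
        exact h1 (ginj hpn hp0 _ _ ha hb hc)
      · intro AB hAB
        have hne : ¬ AB.1 = AB.2 := (Finset.mem_filter.mp hAB).2
        have h4 : AB.1.2 + AB.2.2 = (AB.1.1 + AB.2.1)^2 :=
          (Finset.mem_filter.mp (Finset.mem_filter.mp hAB).1).2
        refine Finset.mem_filter.mpr ⟨Finset.mem_univ _, ?_, ?_, ?_, ?_⟩
        · intro hc
          apply hne
          have := congrArg (gmap p n) hc
          rwa [hge, hge] at this
        · exact (emap p n hpn hp0 AB.1).isLt.trans_le (le_refl _) |>.trans_le (le_of_eq rfl) |> fun _ => by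
            have h1 : AB.1.1.val < p := ZMod.val_lt _
            have h2' : AB.1.2.val < p := ZMod.val_lt _
            show p * AB.1.1.val + AB.1.2.val < p * p
            nlinarith
        · have h1 : AB.2.1.val < p := ZMod.val_lt _
          have h2' : AB.2.2.val < p := ZMod.val_lt _
          show p * AB.2.1.val + AB.2.2.val < p * p
          nlinarith
        · show (gmap p n (emap p n hpn hp0 AB.1)).2 + (gmap p n (emap p n hpn hp0 AB.2)).2
            = ((gmap p n (emap p n hpn hp0 AB.1)).1 + (gmap p n (emap p n hpn hp0 AB.2)).1)^2
          rw [hge, hge]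
          exact h4
      · intro q hq
        obtain ⟨h1, ha, hb, h4⟩ : Qrel p n q.1 q.2 := (Finset.mem_filter.mp hq).2
        exact Prod.ext (heg hpn hp0 _ ha) (heg hpn hp0 _ hb)
      · intro AB hAB
        exact Prod.ext (hge hpn hp0 _) (hge hpn hp0 _)
    rw [step1]
    have cardDq : Dq.card = p^3 := by
      have hbij : Dq.card = (Finset.univ : Finset (ZMod p × ZMod p × ZMod p)).card := by
        refine Finset.card_bij' (fun AB _ => (AB.1.1, AB.1.2, AB.2.1))
          (fun t _ => ((t.1, t.2.1), (t.2.2, (t.1 + t.2.2)^2 - t.2.1))) ?_ ?_ ?_ ?_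
        · intro AB hAB; exact Finset.mem_univ _
        · intro t _
          refine Finset.mem_filter.mpr ⟨Finset.mem_univ _, ?_⟩
          show t.2.1 + ((t.1 + t.2.2)^2 - t.2.1) = (t.1 + t.2.2)^2
          ring
        · intro AB hAB
          have h4 : AB.1.2 + AB.2.2 = (AB.1.1 + AB.2.1)^2 := (Finset.mem_filter.mp hAB).2
          have hb2 : (AB.1.1 + AB.2.1)^2 - AB.1.2 = AB.2.2 := by rw [← h4]; ring
          show ((AB.1.1, AB.1.2), (AB.2.1, (AB.1.1 + AB.2.1)^2 - AB.1.2)) = AB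
          rw [hb2]
        · intro t _; rfl
      rw [hbij]
      simp only [Finset.card_univ, Fintype.card_prod, ZMod.card]
      ring
    have cardDiag : (Dq.filter fun AB => AB.1 = AB.2).card = p := by
      have hbij : (Dq.filter fun AB => AB.1 = AB.2).card = (Finset.univ : Finset (ZMod p)).card := by
        refine Finset.card_bij' (fun AB _ => AB.1.1) (fun t _ => ((t, 2*t^2), (t, 2*t^2))) ?_ ?_ ?_ ?_
        · intro AB hAB; exact Finset.mem_univ _
        · intro t _
          refine Finset.mem_filter.mpr ⟨Finset.mem_filter.mpr ⟨Finset.mem_univ _, ?_⟩, rfl⟩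
          show 2*t^2 + 2*t^2 = (t + t)^2
          ring
        · intro AB hAB
          have hdiag : AB.1 = AB.2 := (Finset.mem_filter.mp hAB).2
          have heq : AB.1.2 + AB.2.2 = (AB.1.1 + AB.2.1)^2 :=
            (Finset.mem_filter.mp (Finset.mem_filter.mp hAB).1).2
          rw [← hdiag] at heq
          have h22 : AB.1.2 = 2 * AB.1.1^2 := by
            apply mul_left_cancel₀ h2
            linear_combination heq
          have h1eq : (AB.1.1, 2*AB.1.1^2) = AB.1 := Prod.ext rfl h22.symm
          exact Prod.ext h1eq (h1eq.trans hdiag)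
        · intro t _; rfl
      rw [hbij]
      simp [ZMod.card]
    have hsplit : (Dq.filter fun AB => ¬ AB.1 = AB.2) = Dq \ (Dq.filter fun AB => AB.1 = AB.2) :=
      Finset.filter_not _ _
    rw [hsplit, Finset.card_sdiff_of_subset (Finset.filter_subset _ _), cardDq, cardDiag]
  · -- C4-free
    rintro ⟨a, b, c, d, hab, hac, had, hbc, hbd, hcd, e1, e2, e3, e4⟩
    rw [decide_eq_true_eq] at e1 e2 e3 e4
    obtain ⟨-, ha', hb', q1⟩ := e1
    obtain ⟨-, -, hc', q2⟩ := e2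
    obtain ⟨-, -, hd', q3⟩ := e3
    obtain ⟨-, -, -, q4⟩ := e4
    set A := gmap p n a with hA
    set B := gmap p n b with hB
    set C := gmap p n c with hC
    set Dv := gmap p n d with hDv
    have hAC : A ≠ C := fun hc2 => hac (ginj hpn hp0 _ _ ha' hc' hc2)
    have hBD : B ≠ Dv := fun hc2 => hbd (ginj hpn hp0 _ _ hb' hd' hc2)
    have key : (2 : ZMod p) * ((A.1 - C.1) * (B.1 - Dv.1)) = 0 := by
      have hz : (A.1+B.1)^2 - (B.1+C.1)^2 + (C.1+Dv.1)^2 - (Dv.1+A.1)^2 = 0 := by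
        rw [← q1, ← q2, ← q3, ← q4]; ring
      linear_combination hz
    have key2 : (A.1 - C.1) * (B.1 - Dv.1) = 0 := by
      rcases mul_eq_zero.mp key with h | h
      · exact absurd h h2
      · exact h
    rcases mul_eq_zero.mp key2 with h | h
    · have h1' : A.1 = C.1 := by linear_combination h
      apply hAC
      have h2' : A.2 = C.2 := by
        have hq : A.2 + B.2 = C.2 + B.2 := by
          rw [q1, add_comm C.2 B.2, q2, h1', add_comm B.1 C.1]
        exact add_right_cancel hq
      exact Prod.ext h1' h2'
    · have h1' : B.1 = Dv.1 := by linear_combination h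
      apply hBD
      have h2' : B.2 = Dv.2 := by
        have hq : A.2 + B.2 = A.2 + Dv.2 := by
          rw [q1, add_comm A.2 Dv.2, q4, h1', add_comm A.1 Dv.1]
        exact add_left_cancel hq
      exact Prod.ext h1' h2'

lemma star_graph (n : ℕ) (hn : 2 ≤ n) :
    ∃ Adj : Fin n → Fin n → Bool,
      (∀ x : Fin n, Adj x x = false) ∧
      (∀ x y : Fin n, Adj x y = Adj y x) ∧
      (Finset.univ.filter fun q : Fin n × Fin n => Adj q.1 q.2 = true).card = 2*(n-1) ∧
      ¬ ∃ a b c d : Fin n, a ≠ b ∧ a ≠ c ∧ a ≠ d ∧ b ≠ c ∧ b ≠ d ∧ c ≠ d ∧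
          Adj a b = true ∧ Adj b c = true ∧ Adj c d = true ∧ Adj d a = true := by
  haveI : NeZero n := ⟨by omega⟩
  refine ⟨fun u v => decide (u ≠ v ∧ (u = 0 ∨ v = 0)), ?_, ?_, ?_, ?_⟩
  · intro x; simp
  · intro x y
    apply decide_eq_decide.mpr
    constructor <;> rintro ⟨h1, h2⟩ <;> exact ⟨Ne.symm h1, h2.symm⟩
  · have hset : (Finset.univ.filter fun q : Fin n × Fin n => decide (q.1 ≠ q.2 ∧ (q.1 = 0 ∨ q.2 = 0)) = true)
        = (({(0:Fin n)} : Finset (Fin n)) ×ˢ Finset.univ.erase 0) ∪ ((Finset.univ.erase 0) ×ˢ ({(0:Fin n)} : Finset (Fin n))) := by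
      ext q
      simp only [Finset.mem_filter, Finset.mem_univ, true_and, Finset.mem_union,
        Finset.mem_product, Finset.mem_singleton, Finset.mem_erase, decide_eq_true_eq, and_true]
      constructor
      · rintro ⟨hne, h0 | h0⟩
        · exact Or.inl ⟨h0, fun hc => hne (h0.trans hc.symm)⟩
        · exact Or.inr ⟨fun hc => hne (hc.trans h0.symm), h0⟩
      · rintro (⟨h1, h2⟩ | ⟨h1, h2⟩)
        · exact ⟨fun hc => h2 (hc ▸ h1), Or.inl h1⟩
        · exact ⟨fun hc => h1 (hc.symm ▸ h2), Or.inr h2⟩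
    rw [hset, Finset.card_union_of_disjoint]
    · rw [Finset.card_product, Finset.card_product, Finset.card_singleton,
        Finset.card_erase_of_mem (Finset.mem_univ _), Finset.card_univ, Fintype.card_fin]
      ring
    · rw [Finset.disjoint_left]
      rintro q hq hq'
      simp only [Finset.mem_product, Finset.mem_singleton, Finset.mem_erase] at hq hq'
      exact hq'.1.1 hq.1
  · rintro ⟨a, b, c, d, hab, hac, had, hbc, hbd, hcd, e1, e2, e3, e4⟩
    rw [decide_eq_true_eq] at e1 e2 e3 e4
    rcases e1.2 with h1 | h1 <;> rcases e3.2 with h3 | h3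
    · exact hac (h1.trans h3.symm)
    · exact had (h1.trans h3.symm)
    · exact hbc (h1.trans h3.symm)
    · exact hbd (h1.trans h3.symm)

/-- For every `n ≥ 2` there is a finite simple graph on `n` vertices with at least
`n^{3/2}/20` edges and with no cycle of length four.  The graph is given by a symmetric,
irreflexive boolean adjacency function; the number of edges is half the number of ordered
adjacent pairs. -/
theorem stmt16 (n : ℕ) (hn : 2 ≤ n) :
    ∃ Adj : Fin n → Fin n → Bool,
      (∀ x : Fin n, Adj x x = false) ∧
      (∀ x y : Fin n, Adj x y = Adj y x) ∧
      ((Finset.univ.filter fun p : Fin n × Fin n => Adj p.1 p.2 = true).card : ℝ) / 2 ≥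
        (n : ℝ) ^ ((3 : ℝ) / 2) / 20 ∧
      ¬ ∃ a b c d : Fin n, a ≠ b ∧ a ≠ c ∧ a ≠ d ∧ b ≠ c ∧ b ≠ d ∧ c ≠ d ∧
          Adj a b = true ∧ Adj b c = true ∧ Adj c d = true ∧ Adj d a = true := by
  by_cases hsmall : n ≤ 24
  · obtain ⟨Adj, hirr, hsym, hcard, hC4⟩ := star_graph n hn
    refine ⟨Adj, hirr, hsym, ?_, hC4⟩
    rw [hcard]
    have harith : n^3 ≤ (20*(n-1))^2 := by
      obtain ⟨m, rfl⟩ : ∃ m, n = m + 2 := ⟨n - 2, by omega⟩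
      have hm : m ≤ 22 := by omega
      have h3 : m*(m*m) ≤ 22*(m*m) := Nat.mul_le_mul_right _ hm
      have hmm : m + 2 - 1 = m + 1 := by omega
      rw [hmm]
      nlinarith [h3]
    have hreal : (n:ℝ) ^ ((3:ℝ)/2) ≤ ((20*(n-1) : ℕ) : ℝ) := key_rpow _ _ harith
    rw [ge_iff_le, div_le_div_iff₀ (by norm_num) (by norm_num)]
    push_cast [Nat.sub_le n 1, (by omega : 1 ≤ n)] at hreal ⊢
    linarith
  · push_neg at hsmall
    set k := Nat.sqrt n with hk
    have hk5 : 5 ≤ k := Nat.le_sqrt.mpr (by omega)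
    have hm0 : k/2 ≠ 0 := by omega
    obtain ⟨p, hp, hpl, hpu⟩ := Nat.exists_prime_lt_and_le_two_mul (k/2) hm0
    have hpk : p ≤ k := by omega
    have hp2 : p ≠ 2 := by omega
    have hppn : p*p ≤ n := le_trans (Nat.mul_le_mul hpk hpk) (Nat.sqrt_le n)
    have h2p : k + 1 ≤ 2*p := by omega
    have hnlt : n < (k+1)*(k+1) := Nat.lt_succ_sqrt n
    obtain ⟨Adj, hirr, hsym, hcard, hC4⟩ := construction p n hp hp2 hppn
    refine ⟨Adj, hirr, hsym, ?_, hC4⟩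
    rw [hcard]
    have h8 : (k+1)^3 ≤ 8*p^3 := by
      calc (k+1)^3 ≤ (2*p)^3 := Nat.pow_le_pow_left h2p 3
        _ = 8*p^3 := by ring
    have h9p : 9*p ≤ p^3 := by nlinarith [hp.two_le, hp2]
    have hkey : (k+1)^3 ≤ 10*(p^3 - p) := by
      set a := (k+1)^3; set b := p^3
      omega
    have harith : n^3 ≤ (10*(p^3 - p))^2 := by
      calc n^3 ≤ ((k+1)*(k+1))^3 := Nat.pow_le_pow_left (by omega) 3
        _ = ((k+1)^3)^2 := by ring
        _ ≤ (10*(p^3-p))^2 := Nat.pow_le_pow_left hkey 2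
    have hreal : (n:ℝ) ^ ((3:ℝ)/2) ≤ ((10*(p^3-p) : ℕ) : ℝ) := key_rpow _ _ harith
    have hple : p ≤ p^3 := by omega
    rw [ge_iff_le, div_le_div_iff₀ (by norm_num) (by norm_num)]
    push_cast [hple] at hreal ⊢
    linarith
end

section
/- Let d ≥ 1 and let D be a d-regular oriented graph on n vertices (every vertex has out-degree d and in-degree d). Then there exist subsets A, B of V(D) with e(A,B) ≥ n/4 and e(B,A) = 0. -/
open Finset

lemma bernoulli_nat (N k : ℕ) : N^(k+1) + (k+1)*N^k ≤ (N+1)^(k+1) := by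
  induction k with
  | zero => simp [pow_succ]
  | succ k ih =>
    have h2 : (N+1) * (N^(k+1) + (k+1)*N^k) ≤ (N+1) * (N+1)^(k+1) :=
      Nat.mul_le_mul_left _ ih
    have e1 : N^(k+2) = N * N^(k+1) := by ring
    have e2 : N^(k+1) = N * N^k := by ring
    have h3 : N^(k+2) + (k+2)*N^(k+1) ≤ (N+1) * (N^(k+1) + (k+1)*N^k) := by
      nlinarith [e1, e2, Nat.zero_le ((k+1)*N^k)]
    calc N^(k+1+1) + (k+1+1)*N^(k+1) ≤ (N+1) * (N^(k+1) + (k+1)*N^k) := h3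
      _ ≤ (N+1) * (N+1)^(k+1) := h2
      _ = (N+1)^(k+1+1) := by ring

lemma keypow (d : ℕ) (hd : 1 ≤ d) : (d+1)^(d+1) ≤ 4 * d^(d+1) := by
  induction d with
  | zero => omega
  | succ d ih =>
    rcases Nat.eq_or_lt_of_le hd with h1 | h1
    · simp [← h1]
    have hd1 : 1 ≤ d := by omega
    have IH := ih hd1
    set N := (d+1)^2 with hN
    have hNval : N = d^2 + 2*d + 1 := by rw [hN]; ring
    have key1 : (d+2) * N^(d+1) ≤ (d+1) * (N+1)^(d+1) := by
      have hb := bernoulli_nat N d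
      have h5 : (d+1) * (N^(d+1) + (d+1)*N^d) ≤ (d+1) * (N+1)^(d+1) :=
        Nat.mul_le_mul_left _ hb
      have hNN : (d+1) * ((d+1)*N^d) = N^(d+1) := by
        rw [hN]; ring
      nlinarith [h5]
    have key2 : (d*(d+2))^(d+1) * (N+1)^(d+1) ≤ (N^2)^(d+1) := by
      rw [← mul_pow]
      apply Nat.pow_le_pow_left
      nlinarith [hNval]
    have key3 : (d+2) * (d*(d+2))^(d+1) ≤ (d+1) * N^(d+1) := by
      have hpos : 0 < (N+1)^(d+1) := Nat.pow_pos (by omega)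
      apply Nat.le_of_mul_le_mul_right _ hpos
      calc (d+2) * (d*(d+2))^(d+1) * (N+1)^(d+1)
          = (d+2) * ((d*(d+2))^(d+1) * (N+1)^(d+1)) := by ring
        _ ≤ (d+2) * (N^2)^(d+1) := Nat.mul_le_mul_left _ key2
        _ = (d+2) * N^(d+1) * N^(d+1) := by rw [← pow_mul, two_mul, pow_add]; ring
        _ ≤ (d+1) * (N+1)^(d+1) * N^(d+1) := Nat.mul_le_mul_right _ key1
        _ = (d+1) * N^(d+1) * (N+1)^(d+1) := by ring
    have hdpos : 0 < d^(d+1) := Nat.pow_pos hd1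
    apply Nat.le_of_mul_le_mul_right _ hdpos
    calc (d+1+1)^(d+1+1) * d^(d+1)
        = (d+2) * (d*(d+2))^(d+1) := by rw [mul_pow]; ring
      _ ≤ (d+1) * N^(d+1) := key3
      _ = (d+1)^(d+1) * (d+1)^(d+1+1) := by rw [hN, ← pow_mul]; ring
      _ ≤ 4 * d^(d+1) * (d+1)^(d+1+1) := Nat.mul_le_mul_right _ IH
      _ = 4 * (d+1)^(d+1+1) * d^(d+1) := by ring



lemma count_arc {V : Type*} [Fintype V] [DecidableEq V] (Adj : V → V → Prop) [DecidableRel Adj]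
    (hasym : ∀ x y : V, Adj x y → ¬ Adj y x) (d : ℕ)
    (hreg : ∀ v : V, (Finset.univ.filter fun w => Adj v w).card = d ∧
        (Finset.univ.filter fun w => Adj w v).card = d)
    (u v : V) (huv : Adj u v) :
    (univ.filter fun f : V → Fin (d+1) => f u = 0 ∧ ∀ w, Adj v w → f w ≠ 0).card
      = d^d * (d+1)^(Fintype.card V - 1 - d) := by
  set c : V → Finset (Fin (d+1)) :=
    fun w => if w = u then {0} else if Adj v w then ({0} : Finset (Fin (d+1)))ᶜ else univ with hc
  have hset : (univ.filter fun f : V → Fin (d+1) => f u = 0 ∧ ∀ w, Adj v w → f w ≠ 0)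
      = Fintype.piFinset c := by
    ext f
    simp only [mem_filter, mem_univ, true_and, Fintype.mem_piFinset]
    constructor
    · rintro ⟨h0, hB⟩ w
      by_cases hw : w = u
      · subst hw; simp [hc, h0]
      · by_cases ha : Adj v w
        · simp [hc, hw, ha, hB w ha]
        · simp [hc, hw, ha]
    · intro h
      have hvu : ¬ Adj v u := hasym u v huv
      refine ⟨?_, ?_⟩
      · have := h u; simpa [hc] using this
      · intro w hw
        have hwu : w ≠ u := by rintro rfl; exact hvu hw
        have := h w; simpa [hc, hwu, hw] using this
  rw [hset, Fintype.card_piFinset]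
  have hcard : ∀ w, (c w).card = if w = u then 1 else if Adj v w then d else d+1 := by
    intro w
    by_cases hw : w = u
    · simp [hc, hw]
    · by_cases ha : Adj v w
      · simp [hc, hw, ha, Finset.card_compl]
      · simp [hc, hw, ha]
  calc ∏ w, (c w).card
      = ∏ w, (if w = u then 1 else if Adj v w then d else d+1) :=
        Finset.prod_congr rfl fun w _ => hcard w
    _ = (if u = u then 1 else if Adj v u then d else d+1)
        * ∏ w ∈ univ.erase u, (if w = u then 1 else if Adj v w then d else d+1) :=
        (Finset.mul_prod_erase univ _ (mem_univ u)).symm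
    _ = ∏ w ∈ univ.erase u, (if Adj v w then d else d+1) := by
        rw [if_pos rfl, one_mul]
        refine Finset.prod_congr rfl fun w hw => ?_
        rw [if_neg (Finset.ne_of_mem_erase hw)]
    _ = d^d * (d+1)^(Fintype.card V - 1 - d) := by
        rw [Finset.prod_ite]
        rw [Finset.prod_const, Finset.prod_const]
        have h1 : ((univ.erase u).filter fun w => Adj v w).card = d := by
          rw [Finset.filter_erase, Finset.erase_eq_of_notMem, (hreg v).1]
          simp [hasym u v huv]
        have h2 : ((univ.erase u).filter fun w => ¬ Adj v w).card
            = Fintype.card V - 1 - d := by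
          have := Finset.card_filter_add_card_filter_not
            (s := univ.erase u) (fun w => Adj v w)
          rw [h1, Finset.card_erase_of_mem (mem_univ u), Finset.card_univ] at this
          omega
        rw [h1, h2]

/-- In every `d`-regular oriented graph on `n` vertices there are subsets `A, B` of the
vertex set with `e(A,B) ≥ n/4` and `e(B,A) = 0`. -/
theorem stmt17 {V : Type*} [Fintype V] [DecidableEq V]
    (Adj : V → V → Prop) [DecidableRel Adj]
    (hasym : ∀ x y : V, Adj x y → ¬ Adj y x)
    (d : ℕ) (hd : 1 ≤ d)
    (hreg : ∀ v : V, (Finset.univ.filter fun w => Adj v w).card = d ∧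
        (Finset.univ.filter fun w => Adj w v).card = d) :
    ∃ A B : Finset V,
      (arcsFrom Adj A B : ℝ) ≥ (Fintype.card V : ℝ) / 4 ∧ arcsFrom Adj B A = 0 := by
  by_cases hV : IsEmpty V
  · refine ⟨∅, ∅, ?_, ?_⟩
    · have : Fintype.card V = 0 := Fintype.card_eq_zero
      simp [arcsFrom, this]
    · simp [arcsFrom]
  have hne : Nonempty V := not_isEmpty_iff.mp hV
  obtain ⟨v0⟩ := hne
  set n := Fintype.card V with hn
  have hnd : d + 1 ≤ n := by
    have h2 : v0 ∉ univ.filter fun w => Adj v0 w := by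
      simp only [mem_filter, mem_univ, true_and]
      intro h; exact hasym _ _ h h
    have h3 := Finset.card_le_card (Finset.subset_univ
      (insert v0 (univ.filter fun w => Adj v0 w)))
    rw [Finset.card_insert_of_notMem h2, (hreg v0).1, Finset.card_univ] at h3
    omega
  set C := d^d * (d+1)^(n-1-d) with hC
  let A : (V → Fin (d+1)) → Finset V := fun f => univ.filter fun x => f x = 0
  let B : (V → Fin (d+1)) → Finset V := fun f => univ.filter fun x => ∀ w, Adj x w → f w ≠ 0
  have hzero : ∀ f, arcsFrom Adj (B f) (A f) = 0 := by
    intro f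
    rw [arcsFrom, Finset.card_eq_zero, Finset.filter_eq_empty_iff]
    rintro ⟨x, y⟩ hxy
    rw [Finset.mem_product] at hxy
    obtain ⟨hx, hy⟩ := hxy
    simp only [A, B, mem_filter, mem_univ, true_and] at hx hy
    intro hadj
    exact hx y hadj hy
  have hX : ∀ f : V → Fin (d+1), arcsFrom Adj (A f) (B f)
      = (univ.filter fun p : V × V =>
          Adj p.1 p.2 ∧ f p.1 = 0 ∧ ∀ w, Adj p.2 w → f w ≠ 0).card := by
    intro f
    rw [arcsFrom]
    congr 1
    ext ⟨x, y⟩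
    simp only [Finset.mem_filter, Finset.mem_product, mem_univ, true_and, A, B, mem_filter]
    tauto
  have htot : ∑ f : V → Fin (d+1), arcsFrom Adj (A f) (B f) = n * (d * C) := by
    calc ∑ f : V → Fin (d+1), arcsFrom Adj (A f) (B f)
        = ∑ f : V → Fin (d+1), ∑ p : V × V,
            (if Adj p.1 p.2 ∧ f p.1 = 0 ∧ ∀ w, Adj p.2 w → f w ≠ 0 then 1 else 0) := by
          refine Finset.sum_congr rfl fun f _ => ?_
          rw [hX f, Finset.card_filter]
      _ = ∑ p : V × V, ∑ f : V → Fin (d+1),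
            (if Adj p.1 p.2 ∧ f p.1 = 0 ∧ ∀ w, Adj p.2 w → f w ≠ 0 then 1 else 0) :=
          Finset.sum_comm
      _ = ∑ u : V, ∑ v : V, ∑ f : V → Fin (d+1),
            (if Adj u v ∧ f u = 0 ∧ ∀ w, Adj v w → f w ≠ 0 then 1 else 0) := by
          rw [Fintype.sum_prod_type]
      _ = ∑ u : V, ∑ v : V, (if Adj u v then C else 0) := by
          refine Finset.sum_congr rfl fun u _ => Finset.sum_congr rfl fun v _ => ?_
          by_cases huv : Adj u v
          · rw [if_pos huv]
            simp only [huv, true_and]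
            rw [← Finset.card_filter, hC, hn]
            exact count_arc Adj hasym d hreg u v huv
          · simp [huv]
      _ = ∑ u : V, (univ.filter fun v => Adj u v).card * C := by
          refine Finset.sum_congr rfl fun u _ => ?_
          rw [← Finset.sum_filter, Finset.sum_const, smul_eq_mul]
      _ = ∑ _u : V, d * C := by
          refine Finset.sum_congr rfl fun u _ => ?_
          rw [(hreg u).1]
      _ = n * (d * C) := by
          rw [Finset.sum_const, Finset.card_univ, smul_eq_mul]
  have hcardF : (univ : Finset (V → Fin (d+1))).card = (d+1)^n := by
    rw [Finset.card_univ, Fintype.card_fun, Fintype.card_fin]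
  have havg : ∑ _f : V → Fin (d+1), n
      ≤ ∑ f : V → Fin (d+1), 4 * arcsFrom Adj (A f) (B f) := by
    rw [Finset.sum_const, ← Finset.mul_sum, htot, hcardF, smul_eq_mul]
    have hkey := keypow d hd
    have hsplit : (d+1)^n = (d+1)^(d+1) * (d+1)^(n-1-d) := by
      rw [← pow_add]; congr 1; omega
    calc (d+1)^n * n = n * ((d+1)^(d+1) * (d+1)^(n-1-d)) := by rw [hsplit]; ring
      _ ≤ n * ((4 * d^(d+1)) * (d+1)^(n-1-d)) :=
        Nat.mul_le_mul_left _ (Nat.mul_le_mul_right _ hkey)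
      _ = 4 * (n * (d * C)) := by rw [hC, pow_succ]; ring
  have hneF : (univ : Finset (V → Fin (d+1))).Nonempty := ⟨fun _ => 0, mem_univ _⟩
  obtain ⟨f, _, hf⟩ := Finset.exists_le_of_sum_le hneF havg
  refine ⟨A f, B f, ?_, hzero f⟩
  rw [ge_iff_le, div_le_iff₀ (by norm_num : (0:ℝ) < 4)]
  have : (n : ℝ) ≤ 4 * (arcsFrom Adj (A f) (B f) : ℝ) := by exact_mod_cast hf

  linarith
end

section
/- Let d ≥ 1 and let D be a d-regular oriented graph on n vertices. Then for each t with 1 ≤ t ≤ n−1 there exists a set A ⊆ V(D) with |A| = t and e^{(2)}(A) ≤ d^2·(t^2 − 1)/n, where e^{(2)}(A) denotes the number of directed paths of length two x→y, y→z with both x ∈ A and z ∈ A. -/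
open Finset

/-- `e^{(2)}(A)`: the number of directed paths of length two `x→y, y→z` with both
endpoints `x, z` in `A`. -/
def pathsTwoWithin {V : Type*} [Fintype V] [DecidableEq V]
    (Adj : V → V → Prop) [DecidableRel Adj] (A : Finset V) : ℕ :=
  (Finset.univ.filter fun t : V × V × V =>
      t.1 ∈ A ∧ t.2.2 ∈ A ∧ Adj t.1 t.2.1 ∧ Adj t.2.1 t.2.2).card

/-- Number of `(s+2)`-subsets of `V` containing two fixed distinct vertices. -/
lemma aux_count_subsets {V : Type*} [Fintype V] [DecidableEq V] (x z : V) (hxz : x ≠ z)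
    (s : ℕ) :
    (((Finset.univ : Finset V).powersetCard (s + 2)).filter fun A => x ∈ A ∧ z ∈ A).card
      = (Fintype.card V - 2).choose s := by
  have hU : ((Finset.univ.erase x).erase z).card = Fintype.card V - 2 := by
    rw [card_erase_of_mem (by simp [Ne.symm hxz]), card_erase_of_mem (mem_univ x), card_univ]
    omega
  rw [← hU, ← Finset.card_powersetCard]
  apply Finset.card_nbij' (fun A => (A.erase x).erase z) (fun B => insert x (insert z B))
  · intro A hA
    simp only [Finset.mem_coe, mem_filter, Finset.mem_powersetCard] at hA
    obtain ⟨⟨_, hcard⟩, hx, hz⟩ := hA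
    rw [Finset.mem_coe, Finset.mem_powersetCard]
    constructor
    · intro a ha
      simp only [mem_erase] at ha ⊢
      exact ⟨ha.1, ha.2.1, mem_univ _⟩
    · rw [card_erase_of_mem (by simp [hz, Ne.symm hxz]), card_erase_of_mem (by simp [hx])]
      omega
  · intro B hB
    rw [Finset.mem_coe, Finset.mem_powersetCard] at hB
    obtain ⟨hsub, hcard⟩ := hB
    have hxB : x ∉ B := fun h => by simpa using (hsub h)
    have hzB : z ∉ B := fun h => by simpa using (hsub h)
    simp only [Finset.mem_coe, mem_filter, Finset.mem_powersetCard]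
    refine ⟨⟨fun a _ => mem_univ _, ?_⟩, by simp, by simp⟩
    rw [Finset.card_insert_of_notMem (by simp [hxz, hxB]),
      Finset.card_insert_of_notMem hzB, hcard]
  · intro A hA
    simp only [Finset.mem_coe, mem_filter] at hA
    obtain ⟨_, hx, hz⟩ := hA
    ext a
    simp only [mem_insert, mem_erase]
    constructor
    · rintro (rfl | rfl | ⟨_, _, h⟩) <;> assumption
    · intro ha
      by_cases h1 : a = x
      · exact Or.inl h1
      · by_cases h2 : a = z
        · exact Or.inr (Or.inl h2)
        · exact Or.inr (Or.inr ⟨h2, h1, ha⟩)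
  · intro B hB
    rw [Finset.mem_coe, Finset.mem_powersetCard] at hB
    have hxB : x ∉ B := fun h => by simpa using (hB.1 h)
    have hzB : z ∉ B := fun h => by simpa using (hB.1 h)
    dsimp only; rw [Finset.erase_insert (by simp [hxz, hxB]), Finset.erase_insert hzB]

/-- In a `d`-regular oriented graph on `n` vertices, for every `t` with `1 ≤ t ≤ n - 1`
there is a vertex subset `A` of size `t` with `e^{(2)}(A) ≤ d^2 (t^2 - 1) / n`. -/
theorem stmt18 {V : Type*} [Fintype V] [DecidableEq V]
    (Adj : V → V → Prop) [DecidableRel Adj]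
    (hasym : ∀ x y : V, Adj x y → ¬ Adj y x)
    (d : ℕ) (hd : 1 ≤ d)
    (hreg : ∀ v : V, (Finset.univ.filter fun w => Adj v w).card = d ∧
        (Finset.univ.filter fun w => Adj w v).card = d)
    (t : ℕ) (ht1 : 1 ≤ t) (ht2 : t ≤ Fintype.card V - 1) :
    ∃ A : Finset V, A.card = t ∧
      (pathsTwoWithin Adj A : ℝ) ≤
        (d : ℝ) ^ 2 * ((t : ℝ) ^ 2 - 1) / (Fintype.card V : ℝ) := by
  have hn2 : 2 ≤ Fintype.card V := by omega
  rcases eq_or_lt_of_le ht1 with h1 | h2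
  · -- t = 1 : take a singleton
    obtain ⟨v⟩ : Nonempty V := Fintype.card_pos_iff.mp (by omega)
    refine ⟨{v}, by simp [← h1], ?_⟩
    have h0 : pathsTwoWithin Adj {v} = 0 := by
      unfold pathsTwoWithin
      rw [Finset.card_eq_zero, Finset.filter_eq_empty_iff]
      rintro ⟨x, y, z⟩ _ ⟨hx, hz, ha1, ha2⟩
      simp only [Finset.mem_singleton] at hx hz
      subst hx; subst hz
      exact hasym _ _ ha1 ha2
    rw [h0, ← h1]
    norm_num
  · -- t ≥ 2
    obtain ⟨s, rfl⟩ : ∃ s, t = s + 2 := ⟨t - 2, by omega⟩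
    obtain ⟨m, hm⟩ : ∃ m, Fintype.card V = m + s + 3 := ⟨Fintype.card V - s - 3, by omega⟩
    set S : Finset (Finset V) := (Finset.univ : Finset V).powersetCard (s + 2) with hS
    set T : Finset (V × V × V) :=
      Finset.univ.filter (fun p => Adj p.1 p.2.1 ∧ Adj p.2.1 p.2.2) with hT
    -- rewrite pathsTwoWithin as a sum of indicators over T
    have hpt : ∀ A : Finset V,
        pathsTwoWithin Adj A = ∑ p ∈ T, (if p.1 ∈ A ∧ p.2.2 ∈ A then 1 else 0) := by
      intro A
      unfold pathsTwoWithin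
      rw [Finset.card_filter, hT, Finset.sum_filter]
      refine Finset.sum_congr rfl fun p _ => ?_
      split_ifs <;> tauto
    -- the total count of paths of length two
    have hTcard : T.card = (m + s + 3) * (d * d) := by
      rw [Finset.card_eq_sum_card_fiberwise
        (f := fun p : V × V × V => p.2.1) (t := Finset.univ) (fun x _ => mem_univ _)]
      have hfib : ∀ y : V, (T.filter fun p => p.2.1 = y).card = d * d := by
        intro y
        have : (T.filter fun p => p.2.1 = y).card =
            ((Finset.univ.filter fun x => Adj x y) ×ˢ
              (Finset.univ.filter fun z => Adj y z)).card := by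
          apply Finset.card_nbij' (fun p => (p.1, p.2.2)) (fun q => (q.1, y, q.2))
          · rintro ⟨x, w, z⟩ hp
            simp only [Finset.mem_coe, hT, mem_filter, mem_univ, true_and] at hp
            obtain ⟨⟨h1, h2⟩, rfl⟩ := hp
            simp [Finset.mem_product, h1, h2]
          · rintro ⟨x, z⟩ hq
            simp only [Finset.mem_coe, Finset.mem_product, mem_filter, mem_univ, true_and] at hq
            simp [hT, hq.1, hq.2]
          · rintro ⟨x, w, z⟩ hp
            simp only [Finset.mem_coe, hT, mem_filter, mem_univ, true_and] at hp
            obtain ⟨_, rfl⟩ := hp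
            rfl
          · rintro ⟨x, z⟩ _
            rfl
        rw [this, Finset.card_product, (hreg y).2, (hreg y).1]
      rw [Finset.sum_congr rfl fun y _ => hfib y, Finset.sum_const, card_univ, hm, smul_eq_mul]
    -- double counting
    have hsum : ∑ A ∈ S, pathsTwoWithin Adj A
        = (m + s + 3) * (d * d) * (m + s + 1).choose s := by
      calc ∑ A ∈ S, pathsTwoWithin Adj A
          = ∑ A ∈ S, ∑ p ∈ T, (if p.1 ∈ A ∧ p.2.2 ∈ A then 1 else 0) := by
            exact Finset.sum_congr rfl fun A _ => hpt A
        _ = ∑ p ∈ T, ∑ A ∈ S, (if p.1 ∈ A ∧ p.2.2 ∈ A then 1 else 0) := Finset.sum_comm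
        _ = ∑ p ∈ T, (S.filter fun A => p.1 ∈ A ∧ p.2.2 ∈ A).card := by
            exact Finset.sum_congr rfl fun p _ => (Finset.card_filter _ _).symm
        _ = ∑ p ∈ T, (m + s + 1).choose s := by
            refine Finset.sum_congr rfl fun p hp => ?_
            simp only [hT, mem_filter, mem_univ, true_and] at hp
            have hne : p.1 ≠ p.2.2 := by
              intro heq
              exact hasym _ _ hp.1 (by rw [heq]; exact hp.2)
            have hcv : Fintype.card V - 2 = m + s + 1 := by omega
            rw [hS, aux_count_subsets p.1 p.2.2 hne s, hcv]
        _ = (m + s + 3) * (d * d) * (m + s + 1).choose s := by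
            simp [Finset.sum_const, hTcard, smul_eq_mul]
    -- binomial identity
    have h1 : (m + s + 3) * (m + s + 2).choose (s + 1)
        = (m + s + 3).choose (s + 2) * (s + 2) := Nat.add_one_mul_choose_eq (m + s + 2) (s + 1)
    have h2 : (m + s + 2) * (m + s + 1).choose s
        = (m + s + 2).choose (s + 1) * (s + 1) := Nat.add_one_mul_choose_eq (m + s + 1) s
    have E : (m + s + 3) * ((m + s + 2) * (m + s + 1).choose s)
        = (m + s + 3).choose (s + 2) * (s + 2) * (s + 1) := by
      rw [h2, ← Nat.mul_assoc, h1]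
    -- the key natural-number inequality (after multiplying by (s+2))
    have step : (m + s + 3) * (d * d) * (m + s + 1).choose s * (m + s + 3) * (s + 2)
        ≤ (m + s + 3).choose (s + 2) * (d * d * ((s + 1) * (s + 3))) * (s + 2) := by
      calc (m + s + 3) * (d * d) * (m + s + 1).choose s * (m + s + 3) * (s + 2)
          = (d * d) * ((m + s + 3) * (s + 2)) * ((m + s + 3) * (m + s + 1).choose s) := by ring
        _ ≤ (d * d) * ((m + s + 2) * (s + 3)) * ((m + s + 3) * (m + s + 1).choose s) := by
            apply Nat.mul_le_mul_right
            apply Nat.mul_le_mul_left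
            nlinarith
        _ = (s + 3) * ((m + s + 3) * ((m + s + 2) * (m + s + 1).choose s)) * (d * d) := by ring
        _ = (s + 3) * ((m + s + 3).choose (s + 2) * (s + 2) * (s + 1)) * (d * d) := by rw [E]
        _ = (m + s + 3).choose (s + 2) * (d * d * ((s + 1) * (s + 3))) * (s + 2) := by ring
    have hNat : (m + s + 3) * (d * d) * (m + s + 1).choose s * (m + s + 3)
        ≤ (m + s + 3).choose (s + 2) * (d * d * ((s + 1) * (s + 3))) :=
      Nat.le_of_mul_le_mul_right step (by omega)
    -- averaging
    have hSne : S.Nonempty := by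
      rw [hS]
      exact Finset.powersetCard_nonempty.mpr (by rw [card_univ]; omega)
    have havg : ∑ A ∈ S, (pathsTwoWithin Adj A : ℝ)
        ≤ ∑ A ∈ S, ((d : ℝ) ^ 2 * (((s : ℝ) + 2) ^ 2 - 1) / (Fintype.card V : ℝ)) := by
      rw [Finset.sum_const, ← Nat.cast_sum, hsum, hS, Finset.card_powersetCard, card_univ, hm]
      have hpos : (0 : ℝ) < ((m + s + 3 : ℕ) : ℝ) := by exact_mod_cast Nat.succ_pos (m + s + 2)
      rw [nsmul_eq_mul, mul_div_assoc', le_div_iff₀ hpos]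
      have hc : (((m + s + 3) * (d * d) * (m + s + 1).choose s * (m + s + 3) : ℕ) : ℝ)
          ≤ (((m + s + 3).choose (s + 2) * (d * d * ((s + 1) * (s + 3))) : ℕ) : ℝ) := by
        exact_mod_cast hNat
      push_cast
      push_cast at hc
      nlinarith [hc]
    obtain ⟨A, hA, hle⟩ := Finset.exists_le_of_sum_le hSne havg
    refine ⟨A, ?_, ?_⟩
    · rw [hS] at hA
      exact (Finset.mem_powersetCard_univ.mp hA)
    · convert hle using 2 <;> try rfl
      push_cast
      ring
end

section
/- Let h ∈ ℕ and let H be an oriented graph on h vertices. Then for every ν ∈ (0,1) there exist real numbers ε > 0 and β with 0 < β < 1/2, and an integer N, such that every oriented graph D on n ≥ N vertices with at least β·n^2 arcs and with bias_ν(D) ≤ ε·e(D) contains H as a subgraph, i.e., there is an injective map φ : V(H) → V(D) such that φ(x)→φ(y) is an arc of D for every arc x→y of H. -/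
open Finset

open scoped Classical

/-- `bias_γ(D) = max { e(A,B) : A,B ⊆ V, e(B,A) ≤ γ e(A,B) }`. -/
noncomputable def biasGamma {V : Type*} [Fintype V] [DecidableEq V]
    (Adj : V → V → Prop) [DecidableRel Adj] (γ : ℝ) : ℕ :=
  Finset.univ.sup fun p : Finset V × Finset V =>
    if (arcsFrom Adj p.2 p.1 : ℝ) ≤ γ * (arcsFrom Adj p.1 p.2 : ℝ) then
      arcsFrom Adj p.1 p.2 else 0

section AuxCounting

variable {V : Type*} (Adj : V → V → Prop) [DecidableRel Adj]

lemma arcsFrom_eq_sum_s19 (A B : Finset V) :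
    arcsFrom Adj A B = ∑ a ∈ A, (B.filter (fun b => Adj a b)).card := by
  classical
  unfold arcsFrom
  rw [Finset.card_eq_sum_card_fiberwise (f := Prod.fst) (t := A)
    (fun p hp => (Finset.mem_product.1 (Finset.mem_filter.1 hp).1).1)]
  refine Finset.sum_congr rfl fun a ha => ?_
  refine Finset.card_bij (fun p _ => p.2) ?_ ?_ ?_
  · intro p hp
    simp only [Finset.mem_filter, Finset.mem_product] at hp ⊢
    obtain ⟨⟨⟨h1, h2⟩, h3⟩, h4⟩ := hp
    exact ⟨h2, h4 ▸ h3⟩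
  · intro p hp q hq hpq
    simp only [Finset.mem_filter] at hp hq
    exact Prod.ext (hp.2.trans hq.2.symm) hpq
  · intro b hb
    simp only [Finset.mem_filter, Finset.mem_product] at hb
    exact ⟨(a, b), by simp [ha, hb.1, hb.2], rfl⟩

lemma arcsFrom_eq_sum' (A B : Finset V) :
    arcsFrom Adj A B = ∑ b ∈ B, (A.filter (fun a => Adj a b)).card := by
  classical
  unfold arcsFrom
  rw [Finset.card_eq_sum_card_fiberwise (f := Prod.snd) (t := B)
    (fun p hp => (Finset.mem_product.1 (Finset.mem_filter.1 hp).1).2)]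
  refine Finset.sum_congr rfl fun b hb => ?_
  refine Finset.card_bij (fun p _ => p.1) ?_ ?_ ?_
  · intro p hp
    simp only [Finset.mem_filter, Finset.mem_product] at hp ⊢
    obtain ⟨⟨⟨h1, h2⟩, h3⟩, h4⟩ := hp
    exact ⟨h1, h4 ▸ h3⟩
  · intro p hp q hq hpq
    simp only [Finset.mem_filter] at hp hq
    exact Prod.ext hpq (hp.2.trans hq.2.symm)
  · intro a ha
    simp only [Finset.mem_filter, Finset.mem_product] at ha
    exact ⟨(a, b), by simp [hb, ha.1, ha.2], rfl⟩

lemma arcsFrom_swap (A B : Finset V) :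
    ((A ×ˢ B).filter fun p => Adj p.2 p.1).card = arcsFrom Adj B A := by
  unfold arcsFrom
  refine Finset.card_bij (fun p _ => p.swap) ?_ ?_ ?_
  · intro p hp
    simp only [Finset.mem_filter, Finset.mem_product] at hp ⊢
    exact ⟨⟨hp.1.2, hp.1.1⟩, hp.2⟩
  · intro p _ q _ hpq
    exact Prod.swap_injective hpq
  · intro q hq
    simp only [Finset.mem_filter, Finset.mem_product] at hq
    exact ⟨q.swap, by simpa [And.comm] using hq, by simp⟩

variable [Fintype V]

/-- Ordered pairs of distinct nonadjacent vertices. -/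
noncomputable def nonAdjPairs : ℕ :=
  ((Finset.univ ×ˢ Finset.univ : Finset (V × V)).filter
    fun p => p.1 ≠ p.2 ∧ ¬ Adj p.1 p.2 ∧ ¬ Adj p.2 p.1).card

lemma prod_card_le (A B : Finset V) (hAB : Disjoint A B) :
    A.card * B.card ≤ arcsFrom Adj A B + arcsFrom Adj B A + nonAdjPairs Adj := by
  classical
  have h1 : ((A ×ˢ B).filter fun p => Adj p.1 p.2).card
      + ((A ×ˢ B).filter fun p => ¬ Adj p.1 p.2).card = A.card * B.card := by
    rw [Finset.card_filter_add_card_filter_not, Finset.card_product]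
  have h2 : ((A ×ˢ B).filter fun p => ¬ Adj p.1 p.2).card
      ≤ ((A ×ˢ B).filter fun p => Adj p.2 p.1).card + nonAdjPairs Adj := by
    have hsplit : (((A ×ˢ B).filter fun p => ¬ Adj p.1 p.2).filter fun p => Adj p.2 p.1).card
        + (((A ×ˢ B).filter fun p => ¬ Adj p.1 p.2).filter fun p => ¬ Adj p.2 p.1).card
        = ((A ×ˢ B).filter fun p => ¬ Adj p.1 p.2).card :=
      Finset.card_filter_add_card_filter_not _
    refine le_trans (le_of_eq hsplit.symm) (Nat.add_le_add ?_ ?_)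
    · exact Finset.card_le_card (by
        intro p hp
        simp only [Finset.mem_filter] at hp ⊢
        exact ⟨hp.1.1, hp.2⟩)
    · refine Finset.card_le_card ?_
      intro p hp
      simp only [Finset.mem_filter, Finset.mem_product, Finset.mem_univ, true_and] at hp ⊢
      obtain ⟨⟨⟨hpA, hpB⟩, hn1⟩, hn2⟩ := hp
      exact ⟨fun he => (Finset.disjoint_left.1 hAB) hpA (he ▸ hpB), hn1, hn2⟩
  have h3 : ((A ×ˢ B).filter fun p => Adj p.2 p.1).card = arcsFrom Adj B A :=
    arcsFrom_swap Adj A B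
  have h0 : ((A ×ˢ B).filter fun p => Adj p.1 p.2).card = arcsFrom Adj A B := rfl
  omega

lemma nonAdj_bound (hor : ∀ x y : V, Adj x y → ¬ Adj y x) :
    nonAdjPairs Adj + numArcs Adj + numArcs Adj ≤ Fintype.card V * Fintype.card V := by
  classical
  have h1 : ((Finset.univ ×ˢ Finset.univ : Finset (V × V)).filter fun p => Adj p.1 p.2).card
      + ((Finset.univ ×ˢ Finset.univ : Finset (V × V)).filter fun p => ¬ Adj p.1 p.2).card
      = Fintype.card V * Fintype.card V := by
    rw [Finset.card_filter_add_card_filter_not, Finset.card_product,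
      Finset.card_univ]
  have h2 : ((Finset.univ ×ˢ Finset.univ : Finset (V × V)).filter fun p => Adj p.1 p.2).card
      = numArcs Adj := rfl
  have hsplit : (((Finset.univ ×ˢ Finset.univ : Finset (V × V)).filter
        fun p => ¬ Adj p.1 p.2).filter fun p => Adj p.2 p.1).card
      + (((Finset.univ ×ˢ Finset.univ : Finset (V × V)).filter
        fun p => ¬ Adj p.1 p.2).filter fun p => ¬ Adj p.2 p.1).card
      = ((Finset.univ ×ˢ Finset.univ : Finset (V × V)).filter fun p => ¬ Adj p.1 p.2).card :=
    Finset.card_filter_add_card_filter_not _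
  have e1 : ((Finset.univ ×ˢ Finset.univ : Finset (V × V)).filter
        fun p => ¬ Adj p.1 p.2).filter (fun p => Adj p.2 p.1)
      = (Finset.univ ×ˢ Finset.univ : Finset (V × V)).filter fun p => Adj p.2 p.1 := by
    rw [Finset.filter_filter]
    refine Finset.filter_congr fun p _ => ?_
    constructor
    · exact And.right
    · exact fun hp => ⟨hor _ _ hp, hp⟩
  have e2 : (((Finset.univ ×ˢ Finset.univ : Finset (V × V)).filter
        fun p => Adj p.2 p.1)).card = numArcs Adj := arcsFrom_swap Adj _ _
  have e3 : nonAdjPairs Adj ≤ (((Finset.univ ×ˢ Finset.univ : Finset (V × V)).filter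
        fun p => ¬ Adj p.1 p.2).filter fun p => ¬ Adj p.2 p.1).card := by
    refine Finset.card_le_card ?_
    intro p hp
    simp only [nonAdjPairs, Finset.mem_filter, Finset.mem_product, Finset.mem_univ,
      true_and] at hp ⊢
    exact ⟨hp.2.1, hp.2.2⟩
  rw [e1, e2] at hsplit
  omega

lemma bias_lower [DecidableEq V] (γ : ℝ) (A B : Finset V)
    (hcond : (arcsFrom Adj A B : ℝ) ≤ γ * (arcsFrom Adj B A : ℝ)) :
    arcsFrom Adj B A ≤ biasGamma Adj γ := by
  have := Finset.le_sup (f := fun p : Finset V × Finset V =>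
    if (arcsFrom Adj p.2 p.1 : ℝ) ≤ γ * (arcsFrom Adj p.1 p.2 : ℝ) then
      arcsFrom Adj p.1 p.2 else 0) (Finset.mem_univ (B, A))
  simpa [biasGamma, hcond] using this

end AuxCounting

set_option maxHeartbeats 1000000 in
lemma pair_aux {V : Type*} [Fintype V] [DecidableEq V] (Adj : V → V → Prop) [DecidableRel Adj]
    (ν μ : ℝ) (hν0 : 0 < ν) (hν1 : ν < 1) (hμ0 : 0 < μ)
    (hbias : (biasGamma Adj ν : ℝ) ≤ (μ^2/4) * (numArcs Adj : ℝ))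
    (he_ub : (numArcs Adj : ℝ) ≤ (Fintype.card V : ℝ)^2 / 2)
    (hNA : (nonAdjPairs Adj : ℝ) ≤ μ^2 * (Fintype.card V : ℝ)^2 / 2)
    (hnμ : 1 ≤ μ * (Fintype.card V : ℝ))
    (A B : Finset V) (hAB : Disjoint A B)
    (hA : μ * (Fintype.card V : ℝ) ≤ A.card) (hB : μ * (Fintype.card V : ℝ) ≤ B.card) :
    (ν/8) * A.card * B.card ≤ (arcsFrom Adj A B : ℝ) := by
  set nr : ℝ := (Fintype.card V : ℝ) with hnr
  set a : ℝ := (A.card : ℝ) with ha_def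
  set b : ℝ := (B.card : ℝ) with hb_def
  have ha0 : 1 ≤ a := le_trans hnμ hA
  have hb0 : 1 ≤ b := le_trans hnμ hB
  have hμn0 : 0 ≤ μ * nr := by linarith
  have habn : μ^2 * nr^2 ≤ a * b := by
    have := mul_le_mul hA hB hμn0 (by linarith : (0:ℝ) ≤ a)
    nlinarith [this]
  have hab1 : 1 ≤ a * b := by nlinarith
  have hsum : a * b ≤ (arcsFrom Adj A B : ℝ) + (arcsFrom Adj B A : ℝ)
      + (nonAdjPairs Adj : ℝ) := by
    have := prod_card_le Adj A B hAB
    rw [ha_def, hb_def]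
    exact_mod_cast this
  by_contra hcon
  push_neg at hcon
  have hcab : (ν/8) * a * b ≤ a * b / 8 := by nlinarith
  have hBA : a * b / 4 ≤ (arcsFrom Adj B A : ℝ) := by linarith
  by_cases hle : (arcsFrom Adj A B : ℝ) ≤ ν * (arcsFrom Adj B A : ℝ)
  · have hb' : (arcsFrom Adj B A : ℝ) ≤ biasGamma Adj ν := by
      exact_mod_cast bias_lower Adj ν A B hle
    have hba2 : (arcsFrom Adj B A : ℝ) ≤ (μ^2/4) * (numArcs Adj : ℝ) := le_trans hb' hbias
    have hεe : (μ^2/4) * (numArcs Adj : ℝ) ≤ μ^2 * nr^2 / 8 := by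
      have := mul_le_mul_of_nonneg_left he_ub (by positivity : (0:ℝ) ≤ μ^2/4)
      calc (μ^2/4) * (numArcs Adj : ℝ) ≤ (μ^2/4) * (nr^2/2) := this
      _ = μ^2 * nr^2 / 8 := by ring
    linarith
  · push_neg at hle
    have h1 : ν * (a * b / 4) ≤ ν * (arcsFrom Adj B A : ℝ) :=
      mul_le_mul_of_nonneg_left hBA (le_of_lt hν0)
    have h2 : (ν/8) * a * b = ν * (a * b / 4) / 2 := by ring
    have h3 : 0 < ν * (a * b / 4) := mul_pos hν0 (by linarith)
    linarith [hle, h1, hcon, h2, h3]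

set_option maxHeartbeats 4000000 in
/-- For every oriented graph `H` on `h` vertices and every `ν ∈ (0,1)` there exist
`ε > 0`, `β ∈ (0, 1/2)` and `N` such that every oriented graph `D` on `n ≥ N` vertices
with at least `β n^2` arcs and `bias_ν(D) ≤ ε e(D)` contains `H` as a subgraph. -/
theorem stmt19 (h : ℕ) (HAdj : Fin h → Fin h → Prop) [DecidableRel HAdj]
    (hH : ∀ x y : Fin h, HAdj x y → ¬ HAdj y x)
    (ν : ℝ) (hν0 : 0 < ν) (hν1 : ν < 1) :
    ∃ ε β : ℝ, 0 < ε ∧ 0 < β ∧ β < 1 / 2 ∧ ∃ N : ℕ,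
      ∀ (V : Type) [Fintype V] [DecidableEq V] (Adj : V → V → Prop) [DecidableRel Adj],
        (∀ x y : V, Adj x y → ¬ Adj y x) →
        N ≤ Fintype.card V →
        (numArcs Adj : ℝ) ≥ β * (Fintype.card V : ℝ) ^ 2 →
        (biasGamma Adj ν : ℝ) ≤ ε * (numArcs Adj : ℝ) →
        ∃ φ : Fin h → V, Function.Injective φ ∧
          ∀ x y : Fin h, HAdj x y → Adj (φ x) (φ y) := by
  rcases Nat.eq_zero_or_pos h with hz | hpos
  · subst hz
    refine ⟨1, 1/4, by norm_num, by norm_num, by norm_num, 0, ?_⟩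
    intro V _ _ Adj _ _ _ _ _
    exact ⟨Fin.elim0, fun a => a.elim0, fun a => a.elim0⟩
  -- constants
  set c : ℝ := ν / 8 with hc_def
  have hc0 : 0 < c := by positivity
  have hc1 : c < 1/8 := by rw [hc_def]; linarith
  have hh1 : (1 : ℝ) ≤ h := by exact_mod_cast hpos
  set μ : ℝ := (c/2)^h / (4 * h^2) with hμ_def
  have hpow0 : 0 < (c/2)^h := by positivity
  have hpow1 : (c/2)^h ≤ 1 := by
    apply pow_le_one₀ (by positivity)
    linarith
  have hμ0 : 0 < μ := by rw [hμ_def]; positivity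
  have hμ1 : μ ≤ 1 / 4 := by
    rw [hμ_def, div_le_iff₀ (by positivity)]
    nlinarith
  obtain ⟨N, hN⟩ := exists_nat_gt (max (2 * (h:ℝ)) (1/μ))
  refine ⟨μ^2/4, 1/2 - μ^2/4, by positivity, by nlinarith, by nlinarith, N, ?_⟩
  intro V _ _ Adj _ hor hcard hdense hbias
  set ε : ℝ := μ^2/4 with hε_def
  set n : ℕ := Fintype.card V with hn_def
  have hn2h : 2 * (h:ℝ) ≤ n :=
    le_trans (le_of_lt (lt_of_le_of_lt (le_max_left _ _) hN)) (by exact_mod_cast hcard)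
  have hnμ : 1 ≤ μ * n := by
    have h1 : 1/μ ≤ (n:ℝ) :=
      le_trans (le_of_lt (lt_of_le_of_lt (le_max_right _ _) hN)) (by exact_mod_cast hcard)
    rw [div_le_iff₀ hμ0] at h1
    linarith [h1]
  have hn0 : 0 < (n:ℝ) := by linarith
  set e : ℕ := numArcs Adj with he_def
  have he_lb : (n:ℝ)^2/2 - μ^2 * (n:ℝ)^2/4 ≤ e := by
    have hrw : (1/2 - μ^2/4) * (n:ℝ)^2 = (n:ℝ)^2/2 - μ^2 * (n:ℝ)^2/4 := by ring
    linarith [hrw ▸ hdense]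
  have hNAe : (nonAdjPairs Adj : ℝ) + e + e ≤ (n:ℝ)^2 := by
    have := nonAdj_bound Adj hor
    have h2 : ((nonAdjPairs Adj + numArcs Adj + numArcs Adj : ℕ) : ℝ)
        ≤ ((Fintype.card V * Fintype.card V : ℕ) : ℝ) := Nat.cast_le.2 this
    push_cast at h2
    calc (nonAdjPairs Adj : ℝ) + e + e ≤ (n:ℝ) * n := h2
    _ = (n:ℝ)^2 := (sq (n:ℝ)).symm
  have he_ub : (e : ℝ) ≤ (n:ℝ)^2 / 2 := by
    have hNA0 : (0:ℝ) ≤ (nonAdjPairs Adj : ℝ) := Nat.cast_nonneg _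
    linarith
  have hNA : (nonAdjPairs Adj : ℝ) ≤ μ^2 * (n:ℝ)^2 / 2 := by linarith
  -- the key pair lemma
  have pair : ∀ A B : Finset V, Disjoint A B → μ * n ≤ A.card → μ * n ≤ B.card →
      c * A.card * B.card ≤ (arcsFrom Adj A B : ℝ) := by
    intro A B hAB hA hB
    rw [hc_def]
    exact pair_aux Adj ν μ hν0 hν1 hμ0 (hε_def ▸ hbias) he_ub hNA hnμ A B hAB hA hB
  -- chunk construction
  have hhn : h ≤ n := by
    have : (h:ℝ) ≤ n := by linarith
    exact_mod_cast this
  set s : ℕ := n / h with hs_def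
  have hs_real : (n:ℝ) / (2*h) ≤ s := by
    have hmod := Nat.div_add_mod n h
    have hmodlt : n % h < h := Nat.mod_lt _ hpos
    have : (n:ℝ) = h * s + (n % h : ℕ) := by exact_mod_cast hmod.symm
    have hmr : ((n % h : ℕ) : ℝ) < h := by exact_mod_cast hmodlt
    have hs0 : (0:ℝ) ≤ s := Nat.cast_nonneg _
    rw [div_le_iff₀ (by positivity)]
    nlinarith
  have hs_pos : (0:ℝ) < s := by
    have : (0:ℝ) < (n:ℝ) / (2*h) := by positivity
    linarith
  set eqv : V ≃ Fin n := Fintype.equivFin V with heqv_def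
  set Vc : Fin h → Finset V := fun j =>
    Finset.univ.filter (fun v => (j:ℕ)*s ≤ (eqv v : ℕ) ∧ (eqv v : ℕ) < ((j:ℕ)+1)*s)
    with hVc_def
  have hVc_mem : ∀ (j : Fin h) (v : V), v ∈ Vc j ↔
      ((j:ℕ)*s ≤ (eqv v : ℕ) ∧ (eqv v : ℕ) < ((j:ℕ)+1)*s) := by
    intro j v; simp [hVc_def]
  have hVc_disj : ∀ j j' : Fin h, j ≠ j' → Disjoint (Vc j) (Vc j') := by
    intro j j' hjj'
    rw [Finset.disjoint_left]
    intro v hv hv'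
    rw [hVc_mem] at hv hv'
    rcases lt_trichotomy (j:ℕ) (j':ℕ) with hlt | heq | hgt
    · have : ((j:ℕ)+1) * s ≤ (j':ℕ) * s := Nat.mul_le_mul_right _ hlt
      omega
    · exact hjj' (Fin.ext heq)
    · have : ((j':ℕ)+1) * s ≤ (j:ℕ) * s := Nat.mul_le_mul_right _ hgt
      omega
  have hVc_card : ∀ j : Fin h, (Vc j).card = s := by
    intro j
    have hub : ((j:ℕ)+1) * s ≤ n := by
      calc ((j:ℕ)+1) * s ≤ h * s := Nat.mul_le_mul_right _ j.2
      _ = s * h := Nat.mul_comm _ _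
      _ ≤ n := Nat.div_mul_le_self n h
    have : (Vc j).card = (Finset.Ico ((j:ℕ)*s) (((j:ℕ)+1)*s)).card := by
      refine Finset.card_bij (fun v _ => (eqv v : ℕ)) ?_ ?_ ?_
      · intro v hv
        rw [hVc_mem] at hv
        simpa [Finset.mem_Ico] using hv
      · intro v _ w _ hvw
        exact eqv.injective (Fin.ext hvw)
      · intro k hk
        simp only [Finset.mem_Ico] at hk
        have hkn : k < n := lt_of_lt_of_le hk.2 hub
        refine ⟨eqv.symm ⟨k, hkn⟩, ?_, ?_⟩
        · rw [hVc_mem]; simpa using hk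
        · simp
    rw [this, Nat.card_Ico, Nat.succ_mul, Nat.add_sub_cancel_left]
  -- greedy embedding
  have hc2' : c/2 ≤ 1 := by linarith
  have hc20 : (0:ℝ) ≤ c/2 := by linarith
  have hch : (c/2)^h = 4*(h:ℝ)^2*μ := by
    rw [hμ_def]
    field_simp
  have e4 : (c/2)^h * ((n:ℝ)/(2*(h:ℝ))) = (2*(h:ℝ))*(μ*(n:ℝ)) := by
    rw [hch]
    field_simp
    ring
  have h2hs : 2*(h:ℝ)*(μ*n) ≤ (c/2)^h * s := by
    calc 2*(h:ℝ)*(μ*n) = (c/2)^h * ((n:ℝ)/(2*(h:ℝ))) := e4.symm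
    _ ≤ (c/2)^h * s := mul_le_mul_of_nonneg_left hs_real (le_of_lt hpow0)
  have hμn_le : μ * n ≤ 2*(h:ℝ)*(μ*n) := by
    have e1 : (1:ℝ) ≤ 2*h := by linarith
    have e2 : (0:ℝ) ≤ μ*n := by linarith
    exact le_mul_of_one_le_left e2 e1
  have hμs : μ * n ≤ (c/2)^h * s := le_trans hμn_le h2hs
  have hhμn : 1 ≤ (h:ℝ)*(μ*n) := by
    have e2 : (0:ℝ) ≤ μ*n := by linarith
    exact le_trans hnμ (le_mul_of_one_le_left e2 hh1)
  have hpowmono : ∀ t : ℕ, t ≤ h → (c/2)^h * (s:ℝ) ≤ (c/2)^t * s := fun t htle =>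
    mul_le_mul_of_nonneg_right (pow_le_pow_of_le_one hc20 hc2' htle) (le_of_lt hs_pos)
  obtain ⟨v0⟩ : Nonempty V := by
    rw [← Fintype.card_pos_iff]
    have : (0:ℝ) < (Fintype.card V : ℝ) := hn0
    exact_mod_cast this
  have step : ∀ t : ℕ, t ≤ h →
      ∃ (φ : Fin h → V) (C : Fin h → Finset V),
        (∀ j : Fin h, C j ⊆ Vc j) ∧
        (∀ j : Fin h, (c/2)^t * (s:ℝ) ≤ ((C j).card : ℝ)) ∧
        (∀ i : Fin h, (i:ℕ) < t → φ i ∈ Vc i) ∧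
        (∀ i i' : Fin h, (i:ℕ) < t → (i':ℕ) < t → HAdj i i' → Adj (φ i) (φ i')) ∧
        (∀ i j : Fin h, (i:ℕ) < t → t ≤ (j:ℕ) → ∀ v ∈ C j,
          (HAdj i j → Adj (φ i) v) ∧ (HAdj j i → Adj v (φ i))) := by
    intro t
    induction t with
    | zero =>
      intro _
      refine ⟨fun _ => v0, Vc, fun j => le_refl _, ?_, ?_, ?_, ?_⟩
      · intro j
        rw [hVc_card j, pow_zero, one_mul]
      · intro i hi; exact absurd hi (Nat.not_lt_zero _)
      · intro i i' hi; exact absurd hi (Nat.not_lt_zero _)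
      · intro i j hi; exact absurd hi (Nat.not_lt_zero _)
    | succ t ih =>
      intro ht1
      have ht : t < h := ht1
      obtain ⟨φ, C, hsub, hsize, hmem, harcs, hfut⟩ := ih (le_of_lt ht)
      set i₀ : Fin h := ⟨t, ht⟩ with hi₀
      have hsize_h : ∀ j : Fin h, (c/2)^h * (s:ℝ) ≤ ((C j).card : ℝ) := fun j =>
        le_trans (hpowmono t (le_of_lt ht)) (hsize j)
      have hsize_big : ∀ j : Fin h, μ * n ≤ ((C j).card : ℝ) := fun j =>
        le_trans hμs (hsize_h j)
      set BdOut : Fin h → Finset V := fun j =>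
        (C i₀).filter (fun v => (((C j).filter (fun w => Adj v w)).card : ℝ)
          < c/2 * ((C j).card : ℝ)) with hBdOut
      set BdIn : Fin h → Finset V := fun j =>
        (C i₀).filter (fun v => (((C j).filter (fun w => Adj w v)).card : ℝ)
          < c/2 * ((C j).card : ℝ)) with hBdIn
      have hdisj0 : ∀ j : Fin h, t < (j:ℕ) → ∀ X ⊆ C i₀, Disjoint X (C j) := by
        intro j hj X hX
        exact (hVc_disj i₀ j (Fin.ne_of_val_ne (Nat.ne_of_lt hj))).mono
          (hX.trans (hsub i₀)) (hsub j)
      have hBdOut_card : ∀ j : Fin h, t < (j:ℕ) → ((BdOut j).card : ℝ) ≤ μ * n := by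
        intro j hj
        by_contra hcon
        push_neg at hcon
        have hne' : (BdOut j).Nonempty := by
          rw [← Finset.card_pos]
          have : (0:ℝ) < ((BdOut j).card : ℝ) := lt_of_lt_of_le (by linarith) (le_of_lt hcon)
          exact_mod_cast this
        have hpl := pair (BdOut j) (C j)
          (hdisj0 j hj _ (Finset.filter_subset _ _)) (le_of_lt hcon) (hsize_big j)
        have hsum2 : (arcsFrom Adj (BdOut j) (C j) : ℝ)
            = ∑ v ∈ BdOut j, (((C j).filter (fun w => Adj v w)).card : ℝ) := by
          rw [arcsFrom_eq_sum_s19]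
          push_cast
          rfl
        have hub2 : (arcsFrom Adj (BdOut j) (C j) : ℝ)
            < c/2 * (((BdOut j).card : ℝ) * ((C j).card : ℝ)) := by
          rw [hsum2]
          calc ∑ v ∈ BdOut j, (((C j).filter (fun w => Adj v w)).card : ℝ)
              < ∑ _v ∈ BdOut j, c/2 * ((C j).card : ℝ) := by
                refine Finset.sum_lt_sum_of_nonempty hne' ?_
                intro v hv
                exact (Finset.mem_filter.1 hv).2
          _ = c/2 * (((BdOut j).card : ℝ) * ((C j).card : ℝ)) := by
                rw [Finset.sum_const, nsmul_eq_mul]; ring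
        have hab : (0:ℝ) < ((BdOut j).card : ℝ) * ((C j).card : ℝ) :=
          mul_pos (lt_of_lt_of_le zero_lt_one (le_trans hnμ (le_of_lt hcon)))
            (lt_of_lt_of_le zero_lt_one (le_trans hnμ (hsize_big j)))
        have hq : c/2 * (((BdOut j).card : ℝ) * ((C j).card : ℝ))
            < c * (((BdOut j).card : ℝ) * ((C j).card : ℝ)) :=
          mul_lt_mul_of_pos_right (by linarith) hab
        have hpl' : c * (((BdOut j).card : ℝ) * ((C j).card : ℝ))
            ≤ (arcsFrom Adj (BdOut j) (C j) : ℝ) := by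
          rw [← mul_assoc]; exact hpl
        linarith
      have hBdIn_card : ∀ j : Fin h, t < (j:ℕ) → ((BdIn j).card : ℝ) ≤ μ * n := by
        intro j hj
        by_contra hcon
        push_neg at hcon
        have hne' : (BdIn j).Nonempty := by
          rw [← Finset.card_pos]
          have : (0:ℝ) < ((BdIn j).card : ℝ) := lt_of_lt_of_le (by linarith) (le_of_lt hcon)
          exact_mod_cast this
        have hpl := pair (C j) (BdIn j)
          ((hdisj0 j hj _ (Finset.filter_subset _ _)).symm) (hsize_big j) (le_of_lt hcon)
        have hsum2 : (arcsFrom Adj (C j) (BdIn j) : ℝ)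
            = ∑ v ∈ BdIn j, (((C j).filter (fun w => Adj w v)).card : ℝ) := by
          rw [arcsFrom_eq_sum']
          push_cast
          rfl
        have hub2 : (arcsFrom Adj (C j) (BdIn j) : ℝ)
            < c/2 * (((C j).card : ℝ) * ((BdIn j).card : ℝ)) := by
          rw [hsum2]
          calc ∑ v ∈ BdIn j, (((C j).filter (fun w => Adj w v)).card : ℝ)
              < ∑ _v ∈ BdIn j, c/2 * ((C j).card : ℝ) := by
                refine Finset.sum_lt_sum_of_nonempty hne' ?_
                intro v hv
                exact (Finset.mem_filter.1 hv).2
          _ = c/2 * (((C j).card : ℝ) * ((BdIn j).card : ℝ)) := by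
                rw [Finset.sum_const, nsmul_eq_mul]; ring
        have hab : (0:ℝ) < ((C j).card : ℝ) * ((BdIn j).card : ℝ) :=
          mul_pos (lt_of_lt_of_le zero_lt_one (le_trans hnμ (hsize_big j)))
            (lt_of_lt_of_le zero_lt_one (le_trans hnμ (le_of_lt hcon)))
        have hq : c/2 * (((C j).card : ℝ) * ((BdIn j).card : ℝ))
            < c * (((C j).card : ℝ) * ((BdIn j).card : ℝ)) :=
          mul_lt_mul_of_pos_right (by linarith) hab
        have hpl' : c * (((C j).card : ℝ) * ((BdIn j).card : ℝ))
            ≤ (arcsFrom Adj (C j) (BdIn j) : ℝ) := by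
          rw [← mul_assoc]; exact hpl
        linarith
      set Bad : Finset V := Finset.univ.biUnion (fun j : Fin h =>
        if t < (j:ℕ) then (if HAdj i₀ j then BdOut j else if HAdj j i₀ then BdIn j else ∅)
        else ∅) with hBad
      have hBad_card : (Bad.card : ℝ) ≤ (h:ℝ) * (μ * n) := by
        have h1 : Bad.card ≤ ∑ j : Fin h, (if t < (j:ℕ) then
            (if HAdj i₀ j then BdOut j else if HAdj j i₀ then BdIn j else ∅) else ∅).card := by
          rw [hBad]
          exact Finset.card_biUnion_le
        have h2 : (Bad.card : ℝ) ≤ ∑ j : Fin h, ((if t < (j:ℕ) then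
            (if HAdj i₀ j then BdOut j else if HAdj j i₀ then BdIn j else ∅) else ∅).card : ℝ) := by
          exact_mod_cast h1
        refine le_trans h2 ?_
        have h3 : ∀ j : Fin h, ((if t < (j:ℕ) then
            (if HAdj i₀ j then BdOut j else if HAdj j i₀ then BdIn j else ∅) else ∅).card : ℝ)
            ≤ μ * n := by
          intro j
          split_ifs with hjt hadj hadj'
          · exact hBdOut_card j hjt
          · exact hBdIn_card j hjt
          · simp only [Finset.card_empty, Nat.cast_zero]; linarith
          · simp only [Finset.card_empty, Nat.cast_zero]; linarith
        calc ∑ j : Fin h, ((if t < (j:ℕ) then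
            (if HAdj i₀ j then BdOut j else if HAdj j i₀ then BdIn j else ∅) else ∅).card : ℝ)
            ≤ ∑ _j : Fin h, μ * n := Finset.sum_le_sum (fun j _ => h3 j)
        _ = (h:ℝ) * (μ * n) := by
            rw [Finset.sum_const, Finset.card_univ, Fintype.card_fin, nsmul_eq_mul]
      have hpick : ((C i₀) \ Bad).Nonempty := by
        rw [← Finset.card_pos]
        have h1 : (C i₀).card ≤ ((C i₀) \ Bad).card + Bad.card :=
          Finset.card_le_card_sdiff_add_card
        have h1' : ((C i₀).card : ℝ) ≤ (((C i₀) \ Bad).card : ℝ) + (Bad.card : ℝ) := by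
          exact_mod_cast h1
        have h2 : 2*(h:ℝ)*(μ*n) ≤ ((C i₀).card : ℝ) := le_trans h2hs (hsize_h i₀)
        have : (0:ℝ) < (((C i₀) \ Bad).card : ℝ) := by linarith
        exact_mod_cast this
      obtain ⟨v, hv⟩ := hpick
      have hvC : v ∈ C i₀ := (Finset.mem_sdiff.1 hv).1
      have hvB : v ∉ Bad := (Finset.mem_sdiff.1 hv).2
      have hgoodOut : ∀ j : Fin h, t < (j:ℕ) → HAdj i₀ j →
          c/2 * ((C j).card : ℝ) ≤ (((C j).filter (fun w => Adj v w)).card : ℝ) := by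
        intro j hj hadj
        by_contra hcon
        push_neg at hcon
        refine hvB ?_
        rw [hBad]
        refine Finset.mem_biUnion.2 ⟨j, Finset.mem_univ _, ?_⟩
        rw [if_pos hj, if_pos hadj, hBdOut]
        exact Finset.mem_filter.2 ⟨hvC, hcon⟩
      have hgoodIn : ∀ j : Fin h, t < (j:ℕ) → ¬ HAdj i₀ j → HAdj j i₀ →
          c/2 * ((C j).card : ℝ) ≤ (((C j).filter (fun w => Adj w v)).card : ℝ) := by
        intro j hj hnadj hadj
        by_contra hcon
        push_neg at hcon
        refine hvB ?_
        rw [hBad]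
        refine Finset.mem_biUnion.2 ⟨j, Finset.mem_univ _, ?_⟩
        rw [if_pos hj, if_neg hnadj, if_pos hadj, hBdIn]
        exact Finset.mem_filter.2 ⟨hvC, hcon⟩
      refine ⟨Function.update φ i₀ v, fun j =>
        if t < (j:ℕ) then (if HAdj i₀ j then (C j).filter (fun w => Adj v w)
          else if HAdj j i₀ then (C j).filter (fun w => Adj w v) else C j) else C j,
        ?_, ?_, ?_, ?_, ?_⟩
      · intro j
        beta_reduce
        split_ifs with h1 h2 h3
        · exact (Finset.filter_subset _ _).trans (hsub j)
        · exact (Finset.filter_subset _ _).trans (hsub j)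
        · exact hsub j
        · exact hsub j
      · intro j
        have hstep : (c/2)^(t+1) * (s:ℝ) = c/2 * ((c/2)^t * s) := by ring
        have hweak : (c/2)^(t+1) * (s:ℝ) ≤ (c/2)^t * s := by
          refine mul_le_mul_of_nonneg_right ?_ (le_of_lt hs_pos)
          exact pow_le_pow_of_le_one hc20 hc2' (Nat.le_succ t)
        beta_reduce
        split_ifs with h1 h2 h3
        · calc (c/2)^(t+1) * (s:ℝ) = c/2 * ((c/2)^t * s) := hstep
          _ ≤ c/2 * ((C j).card : ℝ) := mul_le_mul_of_nonneg_left (hsize j) hc20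
          _ ≤ _ := hgoodOut j h1 h2
        · calc (c/2)^(t+1) * (s:ℝ) = c/2 * ((c/2)^t * s) := hstep
          _ ≤ c/2 * ((C j).card : ℝ) := mul_le_mul_of_nonneg_left (hsize j) hc20
          _ ≤ _ := hgoodIn j h1 h2 h3
        · exact le_trans hweak (hsize j)
        · exact le_trans hweak (hsize j)
      · intro i hi
        by_cases hi0 : (i:ℕ) < t
        · rw [Function.update_of_ne (Fin.ne_of_val_ne (Nat.ne_of_lt hi0))]
          exact hmem i hi0
        · have heq : i = i₀ := by apply Fin.ext; show (i:ℕ) = t; omega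
          rw [heq, Function.update_self]
          exact hsub i₀ hvC
      · intro i i' hi hi' hadj
        by_cases hi0 : (i:ℕ) < t
        · by_cases hi'0 : (i':ℕ) < t
          · rw [Function.update_of_ne (Fin.ne_of_val_ne (Nat.ne_of_lt hi0)),
              Function.update_of_ne (Fin.ne_of_val_ne (Nat.ne_of_lt hi'0))]
            exact harcs i i' hi0 hi'0 hadj
          · have heq : i' = i₀ := by apply Fin.ext; show (i':ℕ) = t; omega
            subst heq
            rw [Function.update_of_ne (Fin.ne_of_val_ne (Nat.ne_of_lt hi0)),
              Function.update_self]
            exact (hfut i i₀ hi0 le_rfl v hvC).1 hadj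
        · have heq : i = i₀ := by apply Fin.ext; show (i:ℕ) = t; omega
          subst heq
          by_cases hi'0 : (i':ℕ) < t
          · rw [Function.update_self,
              Function.update_of_ne (Fin.ne_of_val_ne (Nat.ne_of_lt hi'0))]
            exact (hfut i' i₀ hi'0 le_rfl v hvC).2 hadj
          · have heq' : i' = i₀ := by apply Fin.ext; show (i':ℕ) = t; omega
            subst heq'
            exact absurd hadj (hH _ _ hadj)
      · intro i j hi hj w hw
        have hjt : t < (j:ℕ) := hj
        beta_reduce at hw
        rw [if_pos hjt] at hw
        have hwC : w ∈ C j := by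
          by_cases h2 : HAdj i₀ j
          · rw [if_pos h2] at hw
            exact Finset.filter_subset _ _ hw
          · rw [if_neg h2] at hw
            by_cases h3 : HAdj j i₀
            · rw [if_pos h3] at hw
              exact Finset.filter_subset _ _ hw
            · rwa [if_neg h3] at hw
        by_cases hi0 : (i:ℕ) < t
        · rw [Function.update_of_ne (Fin.ne_of_val_ne (Nat.ne_of_lt hi0))]
          exact hfut i j hi0 (by omega) w hwC
        · have heq : i = i₀ := by apply Fin.ext; show (i:ℕ) = t; omega
          subst heq
          rw [Function.update_self]
          constructor
          · intro hadj
            rw [if_pos hadj] at hw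
            exact (Finset.mem_filter.1 hw).2
          · intro hadj
            have hnadj : ¬ HAdj i₀ j := hH _ _ hadj
            rw [if_neg hnadj, if_pos hadj] at hw
            exact (Finset.mem_filter.1 hw).2
  obtain ⟨φ, C, hsub, hsize, hmem, harcs, hfut⟩ := step h le_rfl
  refine ⟨φ, ?_, ?_⟩
  · intro i i' he
    by_contra hne
    have h1 : φ i ∈ Vc i := hmem i i.isLt
    have h2 : φ i' ∈ Vc i' := hmem i' i'.isLt
    rw [he] at h1
    exact (Finset.disjoint_left.1 (hVc_disj i i' hne)) (he ▸ hmem i i.isLt) h2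
  · exact fun x y hxy => harcs x y x.isLt y.isLt hxy
end
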